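/- arXiv:2305.00140 — 5 statements merged into one kernel-verified Lean document; each statement's English description precedes it below -/
import Mathlib

section
/- (3-wise Major Order Theorem) Let x, y be two alternatives of an election with voting profile V over a finite set C of alternatives. Suppose that δ_{xy} > 0 (i.e., x > y is the major order), that Q_{x,y,z} ≥ 0 for all z ∈ C ∖ {x,y}, and that 2δ_{xy} > Σ_{z ∈ C∖{x,y}} max(0, −P_{x,y,z} + Σ_{t ∈ C∖{x,y,z}} max(0, S_{y,x,z,t})). Then x is ranked before y in every 3-wise median of the election. -/
set_option linter.unusedSectionVars false


open Finset

variable {α : Type}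

/-- A ranking of the alternatives: a duplicate-free list containing every
alternative; earlier in the list means more preferred. -/
def IsRanking (l : List α) : Prop := l.Nodup ∧ ∀ a : α, a ∈ l

/-- The 3-wise Kendall tau distance between two rankings: the number of subsets
`S` with `|S| ≤ 3` on which the two rankings have different top elements. -/
def d3 [Fintype α] [DecidableEq α] (l m : List α) : ℕ :=
  ((Finset.univ : Finset α).powerset.filter
    (fun S => S.card ≤ 3 ∧ ∃ a ∈ S, ∃ b ∈ S, a ≠ b ∧
      (∀ c ∈ S, l.idxOf a ≤ l.idxOf c) ∧ (∀ c ∈ S, m.idxOf b ≤ m.idxOf c))).card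

/-- Total 3-wise Kendall tau distance from a ranking to a voting profile. -/
def d3V [Fintype α] [DecidableEq α] (l : List α) (V : Multiset (List α)) : ℕ :=
  (V.map (fun v => d3 l v)).sum

/-- A 3-wise median of the voting profile `V`. -/
def IsMedian3 [Fintype α] [DecidableEq α] (V : Multiset (List α)) (l : List α) : Prop :=
  IsRanking l ∧ ∀ m : List α, IsRanking m → d3V l V ≤ d3V m V

/-- The 2-wise Kendall tau distance between two rankings: the number of
two-element subsets on which the relative orders differ. -/
def d2 [Fintype α] [DecidableEq α] (l m : List α) : ℕ :=
  ((Finset.univ : Finset α).powerset.filter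
    (fun S => S.card = 2 ∧ ∃ a ∈ S, ∃ b ∈ S,
      l.idxOf a < l.idxOf b ∧ m.idxOf b < m.idxOf a)).card

/-- Total 2-wise Kendall tau distance from a ranking to a voting profile. -/
def d2V [Fintype α] [DecidableEq α] (l : List α) (V : Multiset (List α)) : ℕ :=
  (V.map (fun v => d2 l v)).sum

/-- A 2-wise median of the voting profile `V`. -/
def IsMedian2 [Fintype α] [DecidableEq α] (V : Multiset (List α)) (l : List α) : Prop :=
  IsRanking l ∧ ∀ m : List α, IsRanking m → d2V l V ≤ d2V m V

/-- `x ≥ₛ y`: `x` is ranked before `y` in at least `s·|V|` votes. -/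
def geq [DecidableEq α] (V : Multiset (List α)) (s : ℝ) (x y : α) : Prop :=
  s * (V.card : ℝ) ≤ (V.countP (fun v => v.idxOf x < v.idxOf y) : ℝ)

/-- `x` is a non-dirty alternative with respect to the threshold `s`. -/
def NonDirty [DecidableEq α] (V : Multiset (List α)) (s : ℝ) (x : α) : Prop :=
  ∀ y : α, y ≠ x → geq V s x y ∨ geq V s y x

/-- The election satisfies the `3/4`-majority rule with respect to the 3-wise
Kemeny voting scheme. -/
def Satisfies34 [Fintype α] [DecidableEq α] (V : Multiset (List α)) : Prop :=
  ∀ x : α, NonDirty V (3/4) x → ∀ y : α, y ≠ x →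
    (geq V (3/4) x y → ∀ π : List α, IsMedian3 V π → π.idxOf x < π.idxOf y) ∧
    (geq V (3/4) y x → ∀ π : List α, IsMedian3 V π → π.idxOf y < π.idxOf x)

/-- `n_{xy}`: the number of votes ranking `x` before `y`. -/
def nn2 [DecidableEq α] (V : Multiset (List α)) (x y : α) : ℕ :=
  V.countP (fun v => v.idxOf x < v.idxOf y)

/-- `n_{xyz}`: the number of votes ranking `x` before `y` before `z`. -/
def nn3 [DecidableEq α] (V : Multiset (List α)) (x y z : α) : ℕ :=
  V.countP (fun v => v.idxOf x < v.idxOf y ∧ v.idxOf y < v.idxOf z)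

/-- `n_{xyzt}`: the number of votes ranking `x` before `y` before `z` before `t`. -/
def nn4 [DecidableEq α] (V : Multiset (List α)) (x y z t : α) : ℕ :=
  V.countP (fun v => v.idxOf x < v.idxOf y ∧ v.idxOf y < v.idxOf z ∧
    v.idxOf z < v.idxOf t)

/-- `δ_{xy} = n_{xy} - n_{yx}`. -/
def del [DecidableEq α] (V : Multiset (List α)) (x y : α) : ℤ :=
  (nn2 V x y : ℤ) - nn2 V y x

/-- `P_{x,y,z}`. -/
def Pq [DecidableEq α] (V : Multiset (List α)) (x y z : α) : ℤ :=
  3 * (nn3 V x z y : ℤ) + nn3 V x y z + nn3 V z x y + nn3 V z y x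
    - 4 * nn3 V y z x - 2 * nn3 V y x z

/-- `Q_{x,y,z}`. -/
def Qq [DecidableEq α] (V : Multiset (List α)) (x y z : α) : ℤ :=
  (nn3 V x y z : ℤ) + nn3 V x z y - nn3 V y x z - nn3 V y z x

/-- `R_{y,x,z,t}`. -/
def Rr [DecidableEq α] (V : Multiset (List α)) (y x z t : α) : ℤ :=
  2 * (nn4 V y z t x : ℤ) + 2 * nn4 V y z x t + nn4 V y t z x + nn4 V y t x z

/-- `S_{y,x,z,t} = R_{y,x,z,t} - R_{x,y,z,t}`. -/
def Ss [DecidableEq α] (V : Multiset (List α)) (y x z t : α) : ℤ :=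
  Rr V y x z t - Rr V x y z t


/-! ### Infrastructure -/

section Infra
variable [DecidableEq α]

lemma find?_eq_some_iff_min {l : List α} (h : l.Nodup) {p : α → Bool} {a : α} :
    l.find? p = some a ↔
      a ∈ l ∧ p a ∧ ∀ b ∈ l, p b → l.idxOf a ≤ l.idxOf b := by
  induction l with
  | nil => simp
  | cons c l ih =>
    rcases List.nodup_cons.mp h with ⟨hc, hnd⟩
    by_cases hpc : p c
    · rw [List.find?_cons_of_pos hpc]
      constructor
      · rintro ⟨rfl⟩
        refine ⟨List.mem_cons_self, hpc, fun b hb hpb => ?_⟩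
        simp [List.idxOf_cons_self]
      · rintro ⟨ha, hpa, hmin⟩
        have h0 := hmin c (List.mem_cons_self) hpc
        rw [List.idxOf_cons_self] at h0
        rcases List.mem_cons.mp ha with rfl | ha'
        · rfl
        · by_cases hac : c = a
          · exact absurd hac.symm (fun h' => hc (h' ▸ ha'))
          · rw [List.idxOf_cons_ne _ hac] at h0; omega
    · rw [List.find?_cons_of_neg hpc, ih hnd]
      constructor
      · rintro ⟨ha, hpa, hmin⟩
        have hac : c ≠ a := fun h' => hc (h' ▸ ha)
        refine ⟨List.mem_cons_of_mem _ ha, hpa, fun b hb hpb => ?_⟩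
        rcases List.mem_cons.mp hb with rfl | hb'
        · exact absurd hpb hpc
        · have hbc : c ≠ b := fun h' => hc (h' ▸ hb')
          rw [List.idxOf_cons_ne _ hac, List.idxOf_cons_ne _ hbc]
          exact Nat.succ_le_succ (hmin b hb' hpb)
      · rintro ⟨ha, hpa, hmin⟩
        rcases List.mem_cons.mp ha with rfl | ha'
        · exact absurd hpa hpc
        · have hac : c ≠ a := fun h' => hc (h' ▸ ha')
          refine ⟨ha', hpa, fun b hb hpb => ?_⟩
          have hbc : c ≠ b := fun h' => hc (h' ▸ hb)
          have := hmin b (List.mem_cons_of_mem _ hb) hpb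
          rw [List.idxOf_cons_ne _ hac, List.idxOf_cons_ne _ hbc] at this
          omega

/-- The top element of a finite set of alternatives according to a ranking. -/
def topF (l : List α) (S : Finset α) : Option α := l.find? (fun a => decide (a ∈ S))

lemma topF_eq_some {l : List α} (hl : IsRanking l) {S : Finset α} {a : α} :
    topF l S = some a ↔ a ∈ S ∧ ∀ b ∈ S, l.idxOf a ≤ l.idxOf b := by
  rw [topF, find?_eq_some_iff_min hl.1]
  simp only [decide_eq_true_eq]
  constructor
  · rintro ⟨_, hpa, hmin⟩
    exact ⟨hpa, fun b hb => hmin b (hl.2 b) hb⟩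
  · rintro ⟨hpa, hmin⟩
    exact ⟨hl.2 a, hpa, fun b _ hb => hmin b hb⟩

lemma topF_eq_none {l : List α} (hl : IsRanking l) {S : Finset α} :
    topF l S = none ↔ S = ∅ := by
  rw [topF, List.find?_eq_none]
  simp only [decide_eq_true_eq]
  constructor
  · intro h
    ext b
    simp only [Finset.notMem_empty, iff_false]
    exact h b (hl.2 b)
  · rintro rfl; simp

lemma topF_exists {l : List α} (hl : IsRanking l) {S : Finset α} (hS : S.Nonempty) :
    ∃ a ∈ S, topF l S = some a := by
  cases h : topF l S with
  | none => exact absurd ((topF_eq_none hl).mp h ▸ hS) (by simp)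
  | some a => exact ⟨a, ((topF_eq_some hl).mp h).1, rfl⟩

lemma indexOf_lt_of_ne {l : List α} (hl : IsRanking l) {a b : α} (hab : a ≠ b)
    (h : l.idxOf a ≤ l.idxOf b) : l.idxOf a < l.idxOf b := by
  rcases Nat.lt_or_ge (l.idxOf a) (l.idxOf b) with h' | h'
  · exact h'
  · have : l.idxOf a = l.idxOf b := le_antisymm h h'
    exact absurd ((List.idxOf_inj (hl.2 a)).mp this) hab

/-- `d3` rewritten via `topF`. -/
lemma d3_eq_topF [Fintype α] {l m : List α} (hl : IsRanking l) (hm : IsRanking m) :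
    d3 l m = ((Finset.univ : Finset α).powerset.filter
      (fun S => S.card ≤ 3 ∧ topF l S ≠ topF m S)).card := by
  unfold d3
  congr 1
  apply Finset.filter_congr
  intro S _
  simp only [and_congr_right_iff]
  intro _
  constructor
  · rintro ⟨a, ha, b, hb, hab, hla, hmb⟩
    have h1 : topF l S = some a := (topF_eq_some hl).mpr ⟨ha, hla⟩
    have h2 : topF m S = some b := (topF_eq_some hm).mpr ⟨hb, hmb⟩
    rw [h1, h2]
    simpa using hab
  · intro hne
    have hS : S.Nonempty := by
      rcases S.eq_empty_or_nonempty with rfl | h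
      · exact absurd (((topF_eq_none hl).mpr rfl).trans
          ((topF_eq_none hm).mpr rfl).symm) hne
      · exact h
    obtain ⟨a, ha, h1⟩ := topF_exists hl hS
    obtain ⟨b, hb, h2⟩ := topF_exists hm hS
    refine ⟨a, ha, b, hb, ?_, ((topF_eq_some hl).mp h1).2, ((topF_eq_some hm).mp h2).2⟩
    rintro rfl
    exact hne (h1.trans h2.symm)

end Infra


section MkList
variable [DecidableEq α] [Fintype α]

/-- The ranking determined by an (injective) integer key. -/
noncomputable def mkList (k : α → ℤ) : List α :=
  (Finset.univ : Finset α).toList.mergeSort (fun a b => decide (k a ≤ k b))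

lemma mkList_isRanking (k : α → ℤ) : IsRanking (mkList k) := by
  have hperm : (mkList k).Perm (Finset.univ : Finset α).toList :=
    List.mergeSort_perm _ _
  constructor
  · exact (Finset.nodup_toList _).perm hperm.symm
  · intro a
    exact hperm.mem_iff.mpr (Finset.mem_toList.mpr (Finset.mem_univ a))

lemma mkList_pairwise {k : α → ℤ} (hk : Function.Injective k) :
    (mkList k).Pairwise (fun a b => k a < k b) := by
  have hs := List.pairwise_mergeSort (le := fun a b => decide (k a ≤ k b))
    (fun a b c hab hbc => by
      simp only [decide_eq_true_eq] at *; omega)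
    (fun a b => by
      simp only [Bool.or_eq_true, decide_eq_true_eq]; omega)
    (Finset.univ : Finset α).toList
  have hnd : (mkList k).Nodup := (mkList_isRanking k).1
  have := hs.and hnd
  refine this.imp ?_
  rintro a b ⟨hab, hne⟩
  simp only [decide_eq_true_eq] at hab
  exact lt_of_le_of_ne hab (fun h => hne (hk h))

lemma pairwise_indexOf_lt {l : List α} {k : α → ℤ} (hl : IsRanking l)
    (hp : l.Pairwise (fun a b => k a < k b)) (a b : α) :
    l.idxOf a < l.idxOf b ↔ k a < k b := by
  have hmem : ∀ c : α, c ∈ l := hl.2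
  have key : ∀ c d : α, l.idxOf c < l.idxOf d → k c < k d := by
    intro c d hcd
    have hc := List.idxOf_lt_length_iff.mpr (hmem c)
    have hd := List.idxOf_lt_length_iff.mpr (hmem d)
    have := List.pairwise_iff_getElem.mp hp (l.idxOf c) (l.idxOf d) hc hd hcd
    rwa [List.getElem_idxOf hc, List.getElem_idxOf hd] at this
  constructor
  · exact key a b
  · intro hk
    rcases Nat.lt_trichotomy (l.idxOf a) (l.idxOf b) with h | h | h
    · exact h
    · have : a = b := (List.idxOf_inj (hmem a)).mp h
      subst this; omega
    · have := key b a h; omega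

lemma indexOf_le_iff_key {l : List α} {k : α → ℤ} (hl : IsRanking l)
    (hp : l.Pairwise (fun a b => k a < k b)) (a b : α) :
    l.idxOf a ≤ l.idxOf b ↔ k a ≤ k b := by
  have h1 := pairwise_indexOf_lt hl hp a b
  have h2 := pairwise_indexOf_lt hl hp b a
  omega

lemma topF_key {l : List α} {k : α → ℤ} (hl : IsRanking l)
    (hp : l.Pairwise (fun a b => k a < k b)) {S : Finset α} {a : α} :
    topF l S = some a ↔ a ∈ S ∧ ∀ b ∈ S, k a ≤ k b := by
  rw [topF_eq_some hl]
  exact and_congr_right fun _ =>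
    forall₂_congr fun b _ => indexOf_le_iff_key hl hp a b

lemma topF_eq_of_key {l : List α} {k : α → ℤ} (hl : IsRanking l)
    (hp : l.Pairwise (fun a b => k a < k b)) {S : Finset α} {a : α}
    (ha : a ∈ S) (hmin : ∀ b ∈ S, k a ≤ k b) : topF l S = some a :=
  (topF_key hl hp).mpr ⟨ha, hmin⟩

lemma pairwise_self_key {l : List α} (hl : IsRanking l) :
    l.Pairwise (fun a b => (l.idxOf a : ℤ) < (l.idxOf b : ℤ)) := by
  have : l.Pairwise (fun a b : α => l.idxOf a < l.idxOf b) := by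
    rw [List.pairwise_iff_getElem]
    intro i j hi hj hij
    have hnd := hl.1
    have h1 : l.idxOf l[i] = i := List.Nodup.idxOf_getElem hnd i hi
    have h2 : l.idxOf l[j] = j := List.Nodup.idxOf_getElem hnd j hj
    omega
  exact this.imp (fun h => by exact_mod_cast h)

end MkList

section Sums
variable [DecidableEq α]

lemma multiset_sum_finset_sum {β γ : Type} (V : Multiset β) (s : Finset γ) (f : β → γ → ℤ) :
    (V.map (fun v => ∑ i ∈ s, f v i)).sum = ∑ i ∈ s, (V.map (fun v => f v i)).sum := by
  induction V using Multiset.induction with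
  | empty => simp
  | cons a V ih =>
      simp only [Multiset.map_cons, Multiset.sum_cons, ih, ← Finset.sum_add_distrib]

lemma sum_map_congr {β : Type} {V : Multiset β} {f g : β → ℤ}
    (h : ∀ v ∈ V, f v = g v) : (V.map f).sum = (V.map g).sum := by
  rw [Multiset.map_congr rfl h]

lemma countP_int {β : Type} (V : Multiset β) (p : β → Prop) [DecidablePred p] :
    ((V.countP p : ℤ)) = (V.map (fun v => if p v then (1:ℤ) else 0)).sum := by
  induction V using Multiset.induction with
  | empty => simp
  | cons a V ih =>
      rw [Multiset.countP_cons, Multiset.map_cons, Multiset.sum_cons]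
      push_cast
      rw [ih]
      by_cases h : p a <;> simp [h] <;> ring

lemma d3_int [Fintype α] {l m : List α} (hl : IsRanking l) (hm : IsRanking m) :
    (d3 l m : ℤ) = ∑ S ∈ (Finset.univ : Finset α).powerset.filter (fun S => S.card ≤ 3),
      (if topF l S ≠ topF m S then (1:ℤ) else 0) := by
  rw [d3_eq_topF hl hm]
  rw [← Finset.filter_filter]
  rw [Finset.card_filter]
  push_cast
  rfl

end Sums


section PerVote
variable [DecidableEq α]

lemma topF_pair_cases {v : List α} (hv : IsRanking v) {a b : α} (hab : a ≠ b) :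
    (topF v {a, b} = some a ∧ v.idxOf a < v.idxOf b) ∨
      (topF v {a, b} = some b ∧ v.idxOf b < v.idxOf a) := by
  obtain ⟨c, hc, htop⟩ := topF_exists hv (⟨a, by simp⟩ : ({a, b} : Finset α).Nonempty)
  have hmin := ((topF_eq_some hv).mp htop).2
  rcases Finset.mem_insert.mp hc with rfl | hc'
  · left
    exact ⟨htop, indexOf_lt_of_ne hv hab (hmin b (by simp))⟩
  · right
    rw [Finset.mem_singleton.mp hc'] at htop hmin
    exact ⟨htop, indexOf_lt_of_ne hv hab.symm (hmin a (by simp))⟩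

lemma topF_triple_cases {v : List α} (hv : IsRanking v) {a b c : α}
    (hab : a ≠ b) (hac : a ≠ c) (hbc : b ≠ c) :
    (topF v {a, b, c} = some a ∧ v.idxOf a < v.idxOf b ∧ v.idxOf a < v.idxOf c) ∨
    (topF v {a, b, c} = some b ∧ v.idxOf b < v.idxOf a ∧ v.idxOf b < v.idxOf c) ∨
    (topF v {a, b, c} = some c ∧ v.idxOf c < v.idxOf a ∧ v.idxOf c < v.idxOf b) := by
  obtain ⟨d, hd, htop⟩ := topF_exists hv (⟨a, by simp⟩ : ({a, b, c} : Finset α).Nonempty)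
  have hmin := ((topF_eq_some hv).mp htop).2
  have ha : a ∈ ({a, b, c} : Finset α) := by simp
  have hb : b ∈ ({a, b, c} : Finset α) := by simp
  have hc' : c ∈ ({a, b, c} : Finset α) := by simp
  rcases Finset.mem_insert.mp hd with rfl | hd'
  · exact Or.inl ⟨htop, indexOf_lt_of_ne hv hab (hmin b hb),
      indexOf_lt_of_ne hv hac (hmin c hc')⟩
  rcases Finset.mem_insert.mp hd' with rfl | hd''
  · exact Or.inr (Or.inl ⟨htop, indexOf_lt_of_ne hv hab.symm (hmin a ha),
      indexOf_lt_of_ne hv hbc (hmin c hc')⟩)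
  · rw [Finset.mem_singleton.mp hd''] at htop hmin
    exact Or.inr (Or.inr ⟨htop, indexOf_lt_of_ne hv hac.symm (hmin a ha),
      indexOf_lt_of_ne hv hbc.symm (hmin b hb)⟩)

lemma G_pair {v : List α} (hv : IsRanking v) {a b : α} (hab : a ≠ b) :
    ((if some b ≠ topF v {a, b} then (1:ℤ) else 0) -
      (if some a ≠ topF v {a, b} then (1:ℤ) else 0)) =
    ((if v.idxOf a < v.idxOf b then (1:ℤ) else 0) -
      (if v.idxOf b < v.idxOf a then (1:ℤ) else 0)) := by
  rcases topF_pair_cases hv hab with ⟨ht, hord⟩ | ⟨ht, hord⟩ <;> rw [ht] <;>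
    simp [Option.some_inj, hab, hab.symm, hord, Nat.lt_asymm hord]

lemma G_triple {v : List α} (hv : IsRanking v) {a b c : α}
    (hab : a ≠ b) (hac : a ≠ c) (hbc : b ≠ c) :
    ((if some b ≠ topF v {a, b, c} then (1:ℤ) else 0) -
      (if some a ≠ topF v {a, b, c} then (1:ℤ) else 0)) =
    ((if v.idxOf a < v.idxOf b ∧ v.idxOf a < v.idxOf c then (1:ℤ) else 0) -
      (if v.idxOf b < v.idxOf a ∧ v.idxOf b < v.idxOf c then (1:ℤ) else 0)) := by
  rcases topF_triple_cases hv hab hac hbc with ⟨ht, h1, h2⟩ | ⟨ht, h1, h2⟩ | ⟨ht, h1, h2⟩ <;>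
    rw [ht] <;>
    simp [Option.some_inj, hab, hab.symm, hac, hac.symm, hbc, hbc.symm, h1, h2,
      Nat.lt_asymm h1, Nat.lt_asymm h2]

end PerVote

section MapSums
variable [DecidableEq α] {V : Multiset (List α)}

lemma mapsum_add (V : Multiset (List α)) (f g : List α → ℤ) :
    (V.map f).sum + (V.map g).sum = (V.map (fun v => f v + g v)).sum :=
  Multiset.sum_map_add.symm

lemma mapsum_neg (V : Multiset (List α)) (f : List α → ℤ) :
    -(V.map f).sum = (V.map (fun v => -f v)).sum := by
  induction V using Multiset.induction with
  | empty => simp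
  | cons a V ih => simp only [Multiset.map_cons, Multiset.sum_cons, neg_add, ih]

lemma mapsum_sub (V : Multiset (List α)) (f g : List α → ℤ) :
    (V.map f).sum - (V.map g).sum = (V.map (fun v => f v - g v)).sum := by
  rw [sub_eq_add_neg, mapsum_neg, mapsum_add]
  simp only [sub_eq_add_neg]

lemma mapsum_smul (V : Multiset (List α)) (c : ℤ) (f : List α → ℤ) :
    c * (V.map f).sum = (V.map (fun v => c * f v)).sum := by
  induction V using Multiset.induction with
  | empty => simp
  | cons a V ih => simp only [Multiset.map_cons, Multiset.sum_cons, mul_add, ih]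

lemma mapsum_nonneg {f : List α → ℤ} (h : ∀ v ∈ V, 0 ≤ f v) :
    0 ≤ (V.map f).sum :=
  Multiset.sum_nonneg (by intro z hz; obtain ⟨v, hv, rfl⟩ := Multiset.mem_map.mp hz; exact h v hv)

lemma mapsum_le {f g : List α → ℤ} (h : ∀ v ∈ V, f v ≤ g v) :
    (V.map f).sum ≤ (V.map g).sum :=
  Multiset.sum_map_le_sum_map f g h

/-- The pairwise comparison value `δ` as a map-sum. -/
lemma del_eq_mapsum (V : Multiset (List α)) (a b : α) :
    del V a b = (V.map (fun v =>
      (if v.idxOf a < v.idxOf b then (1:ℤ) else 0) -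
        (if v.idxOf b < v.idxOf a then (1:ℤ) else 0))).sum := by
  rw [del, nn2, nn2, countP_int, countP_int, mapsum_sub]

lemma Qq_eq_mapsum (V : Multiset (List α)) (a b c : α) :
    Qq V a b c = (V.map (fun v =>
      ((if v.idxOf a < v.idxOf b ∧ v.idxOf b < v.idxOf c then (1:ℤ) else 0) +
       (if v.idxOf a < v.idxOf c ∧ v.idxOf c < v.idxOf b then (1:ℤ) else 0)) -
      ((if v.idxOf b < v.idxOf a ∧ v.idxOf a < v.idxOf c then (1:ℤ) else 0) +
       (if v.idxOf b < v.idxOf c ∧ v.idxOf c < v.idxOf a then (1:ℤ) else 0)))).sum := by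
  rw [Qq, nn3, nn3, nn3, nn3, countP_int, countP_int, countP_int, countP_int]
  rw [mapsum_add, mapsum_sub, mapsum_sub]
  exact sum_map_congr (fun v _ => by ring)

end MapSums


section Comb
variable [DecidableEq α]

lemma idx_ne {v : List α} (hv : IsRanking v) {a b : α} (hab : a ≠ b) :
    v.idxOf a ≠ v.idxOf b :=
  fun h => hab ((List.idxOf_inj (hv.2 a)).mp h)

/-- `Pval V a b` : map-sum form of `del`. -/
def PvalM (V : Multiset (List α)) (a b : α) : ℤ :=
  (V.map (fun v => (if v.idxOf a < v.idxOf b then (1:ℤ) else 0) -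
    (if v.idxOf b < v.idxOf a then (1:ℤ) else 0))).sum

lemma PvalM_eq_del (V : Multiset (List α)) (a b : α) : PvalM V a b = del V a b :=
  (del_eq_mapsum V a b).symm

/-- `TvalM V a b c` : map-sum counting votes where `a` is top of `{a,b,c}` minus
votes where `b` is top. -/
def TvalM (V : Multiset (List α)) (a b c : α) : ℤ :=
  (V.map (fun v =>
    (if v.idxOf a < v.idxOf b ∧ v.idxOf a < v.idxOf c then (1:ℤ) else 0) -
    (if v.idxOf b < v.idxOf a ∧ v.idxOf b < v.idxOf c then (1:ℤ) else 0))).sum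

lemma pt_triple {v : List α} (hv : IsRanking v) {a b c : α}
    (hab : a ≠ b) (hac : a ≠ c) (hbc : b ≠ c) :
    ((if v.idxOf a < v.idxOf b ∧ v.idxOf a < v.idxOf c then (1:ℤ) else 0) -
     (if v.idxOf b < v.idxOf a ∧ v.idxOf b < v.idxOf c then (1:ℤ) else 0)) =
    ((if v.idxOf a < v.idxOf b ∧ v.idxOf b < v.idxOf c then (1:ℤ) else 0) +
     (if v.idxOf a < v.idxOf c ∧ v.idxOf c < v.idxOf b then (1:ℤ) else 0)) -
    ((if v.idxOf b < v.idxOf a ∧ v.idxOf a < v.idxOf c then (1:ℤ) else 0) +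
     (if v.idxOf b < v.idxOf c ∧ v.idxOf c < v.idxOf a then (1:ℤ) else 0)) := by
  have n1 := idx_ne hv hab
  have n2 := idx_ne hv hac
  have n3 := idx_ne hv hbc
  have e1 : (v.idxOf b < v.idxOf a) ↔ ¬ (v.idxOf a < v.idxOf b) := by omega
  have e2 : (v.idxOf c < v.idxOf a) ↔ ¬ (v.idxOf a < v.idxOf c) := by omega
  have e3 : (v.idxOf c < v.idxOf b) ↔ ¬ (v.idxOf b < v.idxOf c) := by omega
  simp only [e1, e2, e3]
  by_cases a1 : v.idxOf a < v.idxOf b <;> by_cases a2 : v.idxOf a < v.idxOf c <;>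
    by_cases a3 : v.idxOf b < v.idxOf c <;>
    simp [a1, a2, a3] <;> omega

lemma TvalM_eq_Qq {V : Multiset (List α)} (hV : ∀ v ∈ V, IsRanking v) {a b c : α}
    (hab : a ≠ b) (hac : a ≠ c) (hbc : b ≠ c) :
    TvalM V a b c = Qq V a b c := by
  rw [Qq_eq_mapsum, TvalM]
  exact sum_map_congr (fun v hv => pt_triple (hV v hv) hab hac hbc)

lemma Pq_eq_mapsum (V : Multiset (List α)) (x y z : α) :
    Pq V x y z = (V.map (fun v =>
      3 * (if v.idxOf x < v.idxOf z ∧ v.idxOf z < v.idxOf y then (1:ℤ) else 0) +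
      (if v.idxOf x < v.idxOf y ∧ v.idxOf y < v.idxOf z then (1:ℤ) else 0) +
      (if v.idxOf z < v.idxOf x ∧ v.idxOf x < v.idxOf y then (1:ℤ) else 0) +
      (if v.idxOf z < v.idxOf y ∧ v.idxOf y < v.idxOf x then (1:ℤ) else 0) -
      4 * (if v.idxOf y < v.idxOf z ∧ v.idxOf z < v.idxOf x then (1:ℤ) else 0) -
      2 * (if v.idxOf y < v.idxOf x ∧ v.idxOf x < v.idxOf z then (1:ℤ) else 0))).sum := by
  rw [Pq, nn3, nn3, nn3, nn3, nn3, nn3, countP_int, countP_int, countP_int, countP_int,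
    countP_int, countP_int, mapsum_smul, mapsum_smul, mapsum_smul,
    mapsum_add, mapsum_add, mapsum_add, mapsum_sub, mapsum_sub]

lemma Rr_eq_mapsum (V : Multiset (List α)) (y x z t : α) :
    Rr V y x z t = (V.map (fun v =>
      2 * (if v.idxOf y < v.idxOf z ∧ v.idxOf z < v.idxOf t ∧ v.idxOf t < v.idxOf x then (1:ℤ) else 0) +
      2 * (if v.idxOf y < v.idxOf z ∧ v.idxOf z < v.idxOf x ∧ v.idxOf x < v.idxOf t then (1:ℤ) else 0) +
      (if v.idxOf y < v.idxOf t ∧ v.idxOf t < v.idxOf z ∧ v.idxOf z < v.idxOf x then (1:ℤ) else 0) +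
      (if v.idxOf y < v.idxOf t ∧ v.idxOf t < v.idxOf x ∧ v.idxOf x < v.idxOf z then (1:ℤ) else 0))).sum := by
  rw [Rr, nn4, nn4, nn4, nn4, countP_int, countP_int, countP_int, countP_int,
    mapsum_smul, mapsum_smul, mapsum_add, mapsum_add, mapsum_add]

lemma pt_quad {v : List α} (hv : IsRanking v) {x y z t : α}
    (hxy : x ≠ y) (hxz : x ≠ z) (hxt : x ≠ t) (hyz : y ≠ z) (hyt : y ≠ t) (hzt : z ≠ t) :
    0 ≤ ((if v.idxOf x < v.idxOf z ∧ v.idxOf x < v.idxOf t then (1:ℤ) else 0) -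
         (if v.idxOf z < v.idxOf x ∧ v.idxOf z < v.idxOf t then (1:ℤ) else 0)) +
        ((if v.idxOf z < v.idxOf y ∧ v.idxOf z < v.idxOf t then (1:ℤ) else 0) -
         (if v.idxOf y < v.idxOf z ∧ v.idxOf y < v.idxOf t then (1:ℤ) else 0)) +
        ((2 * (if v.idxOf y < v.idxOf z ∧ v.idxOf z < v.idxOf t ∧ v.idxOf t < v.idxOf x then (1:ℤ) else 0) +
          2 * (if v.idxOf y < v.idxOf z ∧ v.idxOf z < v.idxOf x ∧ v.idxOf x < v.idxOf t then (1:ℤ) else 0) +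
          (if v.idxOf y < v.idxOf t ∧ v.idxOf t < v.idxOf z ∧ v.idxOf z < v.idxOf x then (1:ℤ) else 0) +
          (if v.idxOf y < v.idxOf t ∧ v.idxOf t < v.idxOf x ∧ v.idxOf x < v.idxOf z then (1:ℤ) else 0)) -
         (2 * (if v.idxOf x < v.idxOf z ∧ v.idxOf z < v.idxOf t ∧ v.idxOf t < v.idxOf y then (1:ℤ) else 0) +
          2 * (if v.idxOf x < v.idxOf z ∧ v.idxOf z < v.idxOf y ∧ v.idxOf y < v.idxOf t then (1:ℤ) else 0) +
          (if v.idxOf x < v.idxOf t ∧ v.idxOf t < v.idxOf z ∧ v.idxOf z < v.idxOf y then (1:ℤ) else 0) +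
          (if v.idxOf x < v.idxOf t ∧ v.idxOf t < v.idxOf y ∧ v.idxOf y < v.idxOf z then (1:ℤ) else 0))) := by
  have n1 := idx_ne hv hxy
  have n2 := idx_ne hv hxz
  have n3 := idx_ne hv hxt
  have n4 := idx_ne hv hyz
  have n5 := idx_ne hv hyt
  have n6 := idx_ne hv hzt
  have e1 : (v.idxOf y < v.idxOf x) ↔ ¬ (v.idxOf x < v.idxOf y) := by omega
  have e2 : (v.idxOf z < v.idxOf x) ↔ ¬ (v.idxOf x < v.idxOf z) := by omega
  have e3 : (v.idxOf t < v.idxOf x) ↔ ¬ (v.idxOf x < v.idxOf t) := by omega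
  have e4 : (v.idxOf z < v.idxOf y) ↔ ¬ (v.idxOf y < v.idxOf z) := by omega
  have e5 : (v.idxOf t < v.idxOf y) ↔ ¬ (v.idxOf y < v.idxOf t) := by omega
  have e6 : (v.idxOf t < v.idxOf z) ↔ ¬ (v.idxOf z < v.idxOf t) := by omega
  simp only [e1, e2, e3, e4, e5, e6]
  by_cases a1 : v.idxOf x < v.idxOf y <;> by_cases a2 : v.idxOf x < v.idxOf z <;>
    by_cases a3 : v.idxOf x < v.idxOf t <;> by_cases a4 : v.idxOf y < v.idxOf z <;>
    by_cases a5 : v.idxOf y < v.idxOf t <;> by_cases a6 : v.idxOf z < v.idxOf t <;>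
    simp [a1, a2, a3, a4, a5, a6] <;> omega

lemma quad_bound {V : Multiset (List α)} (hV : ∀ v ∈ V, IsRanking v) {x y z t : α}
    (hxy : x ≠ y) (hxz : x ≠ z) (hxt : x ≠ t) (hyz : y ≠ z) (hyt : y ≠ t) (hzt : z ≠ t) :
    0 ≤ TvalM V x z t + TvalM V z y t + Ss V y x z t := by
  rw [Ss, Rr_eq_mapsum, Rr_eq_mapsum, TvalM, TvalM, mapsum_sub, mapsum_add, mapsum_add]
  exact mapsum_nonneg (fun v hv => pt_quad (hV v hv) hxy hxz hxt hyz hyt hzt)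

lemma pt_bracket {v : List α} (hv : IsRanking v) {x y z : α}
    (hxy : x ≠ y) (hxz : x ≠ z) (hyz : y ≠ z) :
    (((if v.idxOf x < v.idxOf z then (1:ℤ) else 0) - (if v.idxOf z < v.idxOf x then (1:ℤ) else 0)) +
     ((if v.idxOf z < v.idxOf y then (1:ℤ) else 0) - (if v.idxOf y < v.idxOf z then (1:ℤ) else 0)) +
     ((if v.idxOf x < v.idxOf y ∧ v.idxOf x < v.idxOf z then (1:ℤ) else 0) -
      (if v.idxOf y < v.idxOf x ∧ v.idxOf y < v.idxOf z then (1:ℤ) else 0)) +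
     ((if v.idxOf z < v.idxOf y ∧ v.idxOf z < v.idxOf x then (1:ℤ) else 0) -
      (if v.idxOf y < v.idxOf z ∧ v.idxOf y < v.idxOf x then (1:ℤ) else 0))) =
    (3 * (if v.idxOf x < v.idxOf z ∧ v.idxOf z < v.idxOf y then (1:ℤ) else 0) +
     (if v.idxOf x < v.idxOf y ∧ v.idxOf y < v.idxOf z then (1:ℤ) else 0) +
     (if v.idxOf z < v.idxOf x ∧ v.idxOf x < v.idxOf y then (1:ℤ) else 0) +
     (if v.idxOf z < v.idxOf y ∧ v.idxOf y < v.idxOf x then (1:ℤ) else 0) -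
     4 * (if v.idxOf y < v.idxOf z ∧ v.idxOf z < v.idxOf x then (1:ℤ) else 0) -
     2 * (if v.idxOf y < v.idxOf x ∧ v.idxOf x < v.idxOf z then (1:ℤ) else 0)) := by
  have n1 := idx_ne hv hxy
  have n2 := idx_ne hv hxz
  have n3 := idx_ne hv hyz
  have e1 : (v.idxOf y < v.idxOf x) ↔ ¬ (v.idxOf x < v.idxOf y) := by omega
  have e2 : (v.idxOf z < v.idxOf x) ↔ ¬ (v.idxOf x < v.idxOf z) := by omega
  have e3 : (v.idxOf z < v.idxOf y) ↔ ¬ (v.idxOf y < v.idxOf z) := by omega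
  simp only [e1, e2, e3]
  by_cases a1 : v.idxOf x < v.idxOf y <;> by_cases a2 : v.idxOf x < v.idxOf z <;>
    by_cases a3 : v.idxOf y < v.idxOf z <;>
    simp [a1, a2, a3] <;> omega

lemma bracket_eq {V : Multiset (List α)} (hV : ∀ v ∈ V, IsRanking v) {x y z : α}
    (hxy : x ≠ y) (hxz : x ≠ z) (hyz : y ≠ z) :
    PvalM V x z + PvalM V z y + TvalM V x y z + TvalM V z y x = Pq V x y z := by
  rw [Pq_eq_mapsum, PvalM, PvalM, TvalM, TvalM, mapsum_add, mapsum_add, mapsum_add]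
  exact sum_map_congr (fun v hv => pt_bracket (hV v hv) hxy hxz hyz)

end Comb


section Moves
variable [DecidableEq α] [Fintype α]

lemma d3V_int {l : List α} {V : Multiset (List α)} :
    (d3V l V : ℤ) = (V.map (fun v => (d3 l v : ℤ))).sum := by
  rw [d3V, Nat.cast_multiset_sum, Multiset.map_map]
  rfl

lemma topF_agree {π : List α} (hπ : IsRanking π) {k : α → ℤ} (hk : Function.Injective k)
    {c : α} (hkeq : ∀ a : α, a ≠ c → k a = 2 * (π.idxOf a : ℤ))
    {S : Finset α} (hc : c ∉ S) : topF π S = topF (mkList k) S := by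
  rcases S.eq_empty_or_nonempty with rfl | hS
  · rw [(topF_eq_none hπ).mpr rfl, (topF_eq_none (mkList_isRanking k)).mpr rfl]
  · obtain ⟨a, ha, htop⟩ := topF_exists hπ hS
    have hmin := ((topF_eq_some hπ).mp htop).2
    rw [htop]
    symm
    apply topF_eq_of_key (mkList_isRanking k) (mkList_pairwise hk) ha
    intro b hb
    have hac : a ≠ c := fun h => hc (h ▸ ha)
    have hbc : b ≠ c := fun h => hc (h ▸ hb)
    rw [hkeq a hac, hkeq b hbc]
    have := hmin b hb
    omega

/-- Generic decomposition of the `d3V` difference when relocating one element `c`. -/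
lemma delta_decomp {V : Multiset (List α)} (hV : ∀ v ∈ V, IsRanking v)
    {π : List α} (hπ : IsRanking π) {c : α} {k : α → ℤ} (hk : Function.Injective k)
    (hkeq : ∀ a : α, a ≠ c → k a = 2 * (π.idxOf a : ℤ)) :
    (d3V π V : ℤ) - (d3V (mkList k) V : ℤ) =
      ∑ T ∈ (Finset.univ.erase c).powerset.filter (fun T => T.card ≤ 2),
        (V.map (fun v =>
          (if topF π (insert c T) ≠ topF v (insert c T) then (1:ℤ) else 0) -
          (if topF (mkList k) (insert c T) ≠ topF v (insert c T) then (1:ℤ) else 0))).sum := by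
  set σ := mkList k with hσdef
  have hσ : IsRanking σ := mkList_isRanking k
  set P3 := (Finset.univ : Finset α).powerset.filter (fun S => S.card ≤ 3) with hP3
  have step1 : (d3V π V : ℤ) - (d3V σ V : ℤ) =
      ∑ S ∈ P3, (V.map (fun v =>
        (if topF π S ≠ topF v S then (1:ℤ) else 0) -
        (if topF σ S ≠ topF v S then (1:ℤ) else 0))).sum := by
    rw [d3V_int, d3V_int, mapsum_sub]
    rw [← multiset_sum_finset_sum]
    apply sum_map_congr
    intro v hv
    rw [d3_int hπ (hV v hv), d3_int hσ (hV v hv), ← Finset.sum_sub_distrib]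
  rw [step1]
  have step2 : ∑ S ∈ P3, (V.map (fun v =>
        (if topF π S ≠ topF v S then (1:ℤ) else 0) -
        (if topF σ S ≠ topF v S then (1:ℤ) else 0))).sum =
      ∑ S ∈ P3.filter (fun S => c ∈ S), (V.map (fun v =>
        (if topF π S ≠ topF v S then (1:ℤ) else 0) -
        (if topF σ S ≠ topF v S then (1:ℤ) else 0))).sum := by
    rw [← Finset.sum_filter_add_sum_filter_not P3 (fun S => c ∈ S)]
    have : ∀ S ∈ P3.filter (fun S => c ∉ S), (V.map (fun v =>
        (if topF π S ≠ topF v S then (1:ℤ) else 0) -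
        (if topF σ S ≠ topF v S then (1:ℤ) else 0))).sum = 0 := by
      intro S hS
      have hc : c ∉ S := (Finset.mem_filter.mp hS).2
      rw [topF_agree hπ hk hkeq hc]
      simp [hσdef]
    rw [Finset.sum_congr rfl this]
    simp
  rw [step2]
  apply Finset.sum_nbij' (fun S => S.erase c) (fun T => insert c T)
  · intro S hS
    rw [Finset.mem_filter] at hS
    obtain ⟨hS1, hcS⟩ := hS
    rw [hP3, Finset.mem_filter, Finset.mem_powerset] at hS1
    rw [Finset.mem_filter, Finset.mem_powerset]
    constructor
    · intro a ha
      rw [Finset.mem_erase] at ha ⊢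
      exact ⟨ha.1, Finset.mem_univ a⟩
    · have := Finset.card_erase_of_mem hcS
      omega
  · intro T hT
    rw [Finset.mem_filter, Finset.mem_powerset] at hT
    rw [Finset.mem_filter, hP3, Finset.mem_filter, Finset.mem_powerset]
    have hcT : c ∉ T := fun h => (Finset.mem_erase.mp (hT.1 h)).1 rfl
    refine ⟨⟨fun a _ => Finset.mem_univ a, ?_⟩, Finset.mem_insert_self c T⟩
    have := Finset.card_insert_of_notMem hcT
    omega
  · intro S hS
    exact Finset.insert_erase (Finset.mem_filter.mp hS).2
  · intro T hT
    rw [Finset.mem_filter, Finset.mem_powerset] at hT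
    exact Finset.erase_insert (fun h => (Finset.mem_erase.mp (hT.1 h)).1 rfl)
  · intro S hS
    rw [Finset.insert_erase (Finset.mem_filter.mp hS).2]

end Moves


section MoveOne
variable [DecidableEq α] [Fintype α]

lemma F_zero {l l' : List α} {S : Finset α} (h : topF l S = topF l' S) (V : Multiset (List α)) :
    (V.map (fun v => (if topF l S ≠ topF v S then (1:ℤ) else 0) -
      (if topF l' S ≠ topF v S then (1:ℤ) else 0))).sum = 0 := by
  rw [h]; simp

lemma powerset_le_two_split (E : Finset α) :
    E.powerset.filter (fun T : Finset α => T.card ≤ 2) =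
      (E.powersetCard 0 ∪ E.powersetCard 1) ∪ E.powersetCard 2 := by
  ext T
  simp only [Finset.mem_filter, Finset.mem_powerset, Finset.mem_union, Finset.mem_powersetCard]
  constructor
  · rintro ⟨h1, h2⟩
    have : T.card = 0 ∨ T.card = 1 ∨ T.card = 2 := by omega
    tauto
  · rintro ((⟨h1, h2⟩ | ⟨h1, h2⟩) | ⟨h1, h2⟩) <;> exact ⟨h1, by omega⟩

lemma disj01 (E : Finset α) : Disjoint (E.powersetCard 0) (E.powersetCard 1) := by
  rw [Finset.disjoint_left]
  intro T h1 h2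
  rw [Finset.mem_powersetCard] at h1 h2
  omega

lemma disj012 (E : Finset α) :
    Disjoint (E.powersetCard 0 ∪ E.powersetCard 1) (E.powersetCard 2) := by
  rw [Finset.disjoint_left]
  intro T h1 h2
  rw [Finset.mem_union] at h1
  rw [Finset.mem_powersetCard] at h2
  rcases h1 with h1 | h1 <;> rw [Finset.mem_powersetCard] at h1 <;> omega

lemma move_one {V : Multiset (List α)} (hV : ∀ v ∈ V, IsRanking v)
    {π : List α} (hπ : IsRanking π) {x y : α} (hxy : x ≠ y)
    (hyx : π.idxOf y < π.idxOf x) :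
    ∃ σ : List α, IsRanking σ ∧
      (d3V π V : ℤ) - (d3V σ V : ℤ) =
        (∑ u ∈ Finset.univ.filter (fun u => π.idxOf y ≤ π.idxOf u ∧ π.idxOf u < π.idxOf x),
          PvalM V x u) +
        ∑ p ∈ (Finset.univ ×ˢ Finset.univ).filter (fun p : α × α =>
            π.idxOf y ≤ π.idxOf p.1 ∧ π.idxOf p.1 < π.idxOf x ∧
            π.idxOf p.1 < π.idxOf p.2 ∧ p.2 ≠ x),
          TvalM V x p.1 p.2 := by
  have hPinj : ∀ a b : α, π.idxOf a = π.idxOf b → a = b :=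
    fun a b h => (List.idxOf_inj (hπ.2 a)).mp h
  set k1 : α → ℤ := fun a => if a = x then 2 * (π.idxOf y : ℤ) - 1
    else 2 * (π.idxOf a : ℤ) with hk1def
  have hk1x : k1 x = 2 * (π.idxOf y : ℤ) - 1 := by simp [hk1def]
  have hk1 : ∀ a : α, a ≠ x → k1 a = 2 * (π.idxOf a : ℤ) :=
    fun a ha => by simp [hk1def, ha]
  have hk : Function.Injective k1 := by
    intro a b h
    by_cases ha : a = x <;> by_cases hb : b = x
    · rw [ha, hb]
    · rw [ha, hk1x, hk1 b hb] at h; omega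
    · rw [hb, hk1x, hk1 a ha] at h; omega
    · rw [hk1 a ha, hk1 b hb] at h
      exact hPinj a b (by omega)
  have hσR := mkList_isRanking k1
  have hσP := mkList_pairwise hk
  have hπtop : ∀ (S : Finset α) (a : α), a ∈ S →
      (∀ b ∈ S, π.idxOf a ≤ π.idxOf b) → topF π S = some a := by
    intro S a ha hmin
    exact topF_eq_of_key hπ (pairwise_self_key hπ) ha
      (fun b hb => by exact_mod_cast Nat.cast_le.mpr (hmin b hb))
  have hσtop : ∀ (S : Finset α) (a : α), a ∈ S →
      (∀ b ∈ S, k1 a ≤ k1 b) → topF (mkList k1) S = some a :=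
    fun S a ha hmin => topF_eq_of_key hσR hσP ha hmin
  refine ⟨mkList k1, hσR, ?_⟩
  rw [delta_decomp hV hπ hk hk1]
  rw [powerset_le_two_split, Finset.sum_union (disj012 _), Finset.sum_union (disj01 _)]
  have S0 : ∑ T ∈ (Finset.univ.erase x).powersetCard 0,
      (V.map (fun v =>
        (if topF π (insert x T) ≠ topF v (insert x T) then (1:ℤ) else 0) -
        (if topF (mkList k1) (insert x T) ≠ topF v (insert x T) then (1:ℤ) else 0))).sum = 0 := by
    rw [Finset.powersetCard_zero, Finset.sum_singleton]
    have h1 : topF π (insert x (∅ : Finset α)) = some x :=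
      hπtop _ x (by simp) (by intro b hb; simp at hb; subst hb; omega)
    have h2 : topF (mkList k1) (insert x (∅ : Finset α)) = some x :=
      hσtop _ x (by simp) (by intro b hb; simp at hb; subst hb; exact le_refl _)
    exact F_zero (h1.trans h2.symm) V
  have S1 : ∑ T ∈ (Finset.univ.erase x).powersetCard 1,
      (V.map (fun v =>
        (if topF π (insert x T) ≠ topF v (insert x T) then (1:ℤ) else 0) -
        (if topF (mkList k1) (insert x T) ≠ topF v (insert x T) then (1:ℤ) else 0))).sum =
      ∑ u ∈ Finset.univ.filter (fun u => π.idxOf y ≤ π.idxOf u ∧ π.idxOf u < π.idxOf x),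
        PvalM V x u := by
    rw [Finset.powersetCard_one, Finset.sum_map]
    simp only [Function.Embedding.coeFn_mk]
    have hsub : Finset.univ.filter (fun u => π.idxOf y ≤ π.idxOf u ∧ π.idxOf u < π.idxOf x)
        ⊆ Finset.univ.erase x := by
      intro u hu
      rw [Finset.mem_filter] at hu
      refine Finset.mem_erase.mpr ⟨?_, Finset.mem_univ u⟩
      rintro rfl; omega
    rw [← Finset.sum_subset hsub]
    · apply Finset.sum_congr rfl
      intro u hu
      rw [Finset.mem_filter] at hu
      obtain ⟨-, hyu, hux⟩ := hu
      have hune : u ≠ x := by rintro rfl; omega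
      have h1 : topF π (insert x {u}) = some u := by
        apply hπtop _ u (by simp)
        intro b hb
        simp only [Finset.mem_insert, Finset.mem_singleton] at hb
        rcases hb with rfl | rfl <;> omega
      have h2 : topF (mkList k1) (insert x {u}) = some x := by
        apply hσtop _ x (by simp)
        intro b hb
        simp only [Finset.mem_insert, Finset.mem_singleton] at hb
        rcases hb with rfl | rfl
        · omega
        · rw [hk1x, hk1 b hune]; omega
      rw [PvalM]
      apply sum_map_congr
      intro v hv
      simp only [h1, h2]
      exact G_pair (hV v hv) (fun h => hune h.symm)
    · intro u hu hnu
      rw [Finset.mem_erase] at hu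
      rw [Finset.mem_filter] at hnu
      push_neg at hnu
      have hune : u ≠ x := hu.1
      have hPux : π.idxOf u ≠ π.idxOf x := fun h => hune (hPinj u x h)
      have hcase : π.idxOf u < π.idxOf y ∨ π.idxOf x < π.idxOf u := by
        have := hnu (Finset.mem_univ u); omega
      rcases hcase with hc | hc
      · have h1 : topF π (insert x {u}) = some u := by
          apply hπtop _ u (by simp)
          intro b hb
          simp only [Finset.mem_insert, Finset.mem_singleton] at hb
          rcases hb with rfl | rfl <;> omega
        have h2 : topF (mkList k1) (insert x {u}) = some u := by
          apply hσtop _ u (by simp)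
          intro b hb
          simp only [Finset.mem_insert, Finset.mem_singleton] at hb
          rcases hb with rfl | rfl
          · rw [hk1x, hk1 u hune]; omega
          · omega
        exact F_zero (h1.trans h2.symm) V
      · have h1 : topF π (insert x {u}) = some x := by
          apply hπtop _ x (by simp)
          intro b hb
          simp only [Finset.mem_insert, Finset.mem_singleton] at hb
          rcases hb with rfl | rfl <;> omega
        have h2 : topF (mkList k1) (insert x {u}) = some x := by
          apply hσtop _ x (by simp)
          intro b hb
          simp only [Finset.mem_insert, Finset.mem_singleton] at hb
          rcases hb with rfl | rfl
          · omega
          · rw [hk1x, hk1 b hune]; omega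
        exact F_zero (h1.trans h2.symm) V
  have S2 : ∑ T ∈ (Finset.univ.erase x).powersetCard 2,
      (V.map (fun v =>
        (if topF π (insert x T) ≠ topF v (insert x T) then (1:ℤ) else 0) -
        (if topF (mkList k1) (insert x T) ≠ topF v (insert x T) then (1:ℤ) else 0))).sum =
      ∑ p ∈ (Finset.univ ×ˢ Finset.univ).filter (fun p : α × α =>
          π.idxOf y ≤ π.idxOf p.1 ∧ π.idxOf p.1 < π.idxOf x ∧
          π.idxOf p.1 < π.idxOf p.2 ∧ p.2 ≠ x),
        TvalM V x p.1 p.2 := by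
    have hbij : ∑ p ∈ ((Finset.univ.erase x) ×ˢ (Finset.univ.erase x)).filter
          (fun p : α × α => π.idxOf p.1 < π.idxOf p.2),
        (V.map (fun v =>
          (if topF π (insert x {p.1, p.2}) ≠ topF v (insert x {p.1, p.2}) then (1:ℤ) else 0) -
          (if topF (mkList k1) (insert x {p.1, p.2}) ≠ topF v (insert x {p.1, p.2}) then (1:ℤ) else 0))).sum =
        ∑ T ∈ (Finset.univ.erase x).powersetCard 2,
        (V.map (fun v =>
          (if topF π (insert x T) ≠ topF v (insert x T) then (1:ℤ) else 0) -
          (if topF (mkList k1) (insert x T) ≠ topF v (insert x T) then (1:ℤ) else 0))).sum := by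
      apply Finset.sum_bij (fun (p : α × α) _ => ({p.1, p.2} : Finset α))
      · intro p hp
        rw [Finset.mem_filter, Finset.mem_product] at hp
        rw [Finset.mem_powersetCard]
        have hne : p.1 ≠ p.2 := by rintro h; rw [h] at hp; omega
        constructor
        · intro a ha
          simp only [Finset.mem_insert, Finset.mem_singleton] at ha
          rcases ha with rfl | rfl
          · exact hp.1.1
          · exact hp.1.2
        · exact Finset.card_pair hne
      · intro p hp q hq heq
        rw [Finset.mem_filter] at hp hq
        have hpne : p.1 ≠ p.2 := by rintro h; rw [h] at hp; omega
        have h1 : p.1 = q.1 ∨ p.1 = q.2 := by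
          have : p.1 ∈ ({q.1, q.2} : Finset α) := by rw [← heq]; simp
          simpa using this
        have h2 : p.2 = q.1 ∨ p.2 = q.2 := by
          have : p.2 ∈ ({q.1, q.2} : Finset α) := by rw [← heq]; simp
          simpa using this
        rcases h1 with e1 | e1
        · rcases h2 with e2 | e2
          · exact absurd (e1.trans e2.symm) hpne
          · exact Prod.ext e1 e2
        · rcases h2 with e2 | e2
          · exfalso
            have o1 := hp.2
            have o2 := hq.2
            rw [e1, e2] at o1
            omega
          · exact absurd (e1.trans e2.symm) hpne
      · intro T hT
        rw [Finset.mem_powersetCard] at hT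
        obtain ⟨a, b, hab, rfl⟩ := Finset.card_eq_two.mp hT.2
        have ha : a ∈ Finset.univ.erase x := hT.1 (by simp)
        have hb : b ∈ Finset.univ.erase x := hT.1 (by simp)
        have hPab : π.idxOf a ≠ π.idxOf b := fun h => hab (hPinj a b h)
        rcases Nat.lt_or_ge (π.idxOf a) (π.idxOf b) with h | h
        · exact ⟨(a, b), Finset.mem_filter.mpr ⟨Finset.mem_product.mpr ⟨ha, hb⟩, h⟩, rfl⟩
        · refine ⟨(b, a), Finset.mem_filter.mpr ⟨Finset.mem_product.mpr ⟨hb, ha⟩,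
            by show π.idxOf b < π.idxOf a; omega⟩, ?_⟩
          exact (Finset.pair_comm a b).symm
      · intro p hp
        rfl
    rw [← hbij]
    have hsub : (Finset.univ ×ˢ Finset.univ).filter (fun p : α × α =>
          π.idxOf y ≤ π.idxOf p.1 ∧ π.idxOf p.1 < π.idxOf x ∧
          π.idxOf p.1 < π.idxOf p.2 ∧ p.2 ≠ x) ⊆
        ((Finset.univ.erase x) ×ˢ (Finset.univ.erase x)).filter
          (fun p : α × α => π.idxOf p.1 < π.idxOf p.2) := by
      intro p hp
      rw [Finset.mem_filter] at hp
      obtain ⟨-, h1, h2, h3, h4⟩ := hp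
      rw [Finset.mem_filter, Finset.mem_product]
      refine ⟨⟨Finset.mem_erase.mpr ⟨?_, Finset.mem_univ _⟩,
        Finset.mem_erase.mpr ⟨h4, Finset.mem_univ _⟩⟩, h3⟩
      rintro rfl; omega
    rw [← Finset.sum_subset hsub]
    · apply Finset.sum_congr rfl
      intro p hp
      rw [Finset.mem_filter] at hp
      obtain ⟨-, hyu, hux, huw, hwx⟩ := hp
      have hune : p.1 ≠ x := by rintro h; rw [h] at hux; omega
      have huwne : p.1 ≠ p.2 := by rintro h; rw [h] at huw; omega
      have h1 : topF π (insert x {p.1, p.2}) = some p.1 := by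
        apply hπtop _ p.1 (by simp)
        intro b hb
        simp only [Finset.mem_insert, Finset.mem_singleton] at hb
        rcases hb with rfl | rfl | rfl <;> omega
      have h2 : topF (mkList k1) (insert x {p.1, p.2}) = some x := by
        apply hσtop _ x (by simp)
        intro b hb
        simp only [Finset.mem_insert, Finset.mem_singleton] at hb
        rcases hb with rfl | rfl | rfl
        · omega
        · rw [hk1x, hk1 _ hune]; omega
        · rw [hk1x, hk1 _ hwx]; omega
      rw [TvalM]
      apply sum_map_congr
      intro v hv
      simp only [h1, h2]
      exact G_triple (hV v hv) (fun h => hune h.symm) (fun h => hwx h.symm) huwne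
    · intro p hp hnp
      rw [Finset.mem_filter, Finset.mem_product] at hp
      obtain ⟨⟨hp1, hp2⟩, huw⟩ := hp
      rw [Finset.mem_filter] at hnp
      push_neg at hnp
      have hune : p.1 ≠ x := (Finset.mem_erase.mp hp1).1
      have hwne : p.2 ≠ x := (Finset.mem_erase.mp hp2).1
      have hPux : π.idxOf p.1 ≠ π.idxOf x := fun h => hune (hPinj _ _ h)
      have hcase : π.idxOf p.1 < π.idxOf y ∨ π.idxOf x < π.idxOf p.1 := by
        have := hnp (Finset.mem_product.mpr ⟨Finset.mem_univ _, Finset.mem_univ _⟩)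
        by_cases hyu : π.idxOf y ≤ π.idxOf p.1
        · have := this hyu
          by_cases hux : π.idxOf p.1 < π.idxOf x
          · exact absurd hwne (by have := this hux huw; simp [this])
          · omega
        · omega
      rcases hcase with hc | hc
      · have h1 : topF π (insert x {p.1, p.2}) = some p.1 := by
          apply hπtop _ p.1 (by simp)
          intro b hb
          simp only [Finset.mem_insert, Finset.mem_singleton] at hb
          rcases hb with rfl | rfl | rfl <;> omega
        have h2 : topF (mkList k1) (insert x {p.1, p.2}) = some p.1 := by
          apply hσtop _ p.1 (by simp)
          intro b hb
          simp only [Finset.mem_insert, Finset.mem_singleton] at hb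
          rcases hb with rfl | rfl | rfl
          · rw [hk1x, hk1 _ hune]; omega
          · omega
          · rw [hk1 _ hune, hk1 _ hwne]; omega
        exact F_zero (h1.trans h2.symm) V
      · have h1 : topF π (insert x {p.1, p.2}) = some x := by
          apply hπtop _ x (by simp)
          intro b hb
          simp only [Finset.mem_insert, Finset.mem_singleton] at hb
          rcases hb with rfl | rfl | rfl <;> omega
        have h2 : topF (mkList k1) (insert x {p.1, p.2}) = some x := by
          apply hσtop _ x (by simp)
          intro b hb
          simp only [Finset.mem_insert, Finset.mem_singleton] at hb
          rcases hb with rfl | rfl | rfl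
          · omega
          · rw [hk1x, hk1 _ hune]; omega
          · rw [hk1x, hk1 _ hwne]; omega
        exact F_zero (h1.trans h2.symm) V
  rw [S0, S1, S2]
  ring

end MoveOne


section MoveTwo
variable [DecidableEq α] [Fintype α]

lemma move_two {V : Multiset (List α)} (hV : ∀ v ∈ V, IsRanking v)
    {π : List α} (hπ : IsRanking π) {x y : α} (hxy : x ≠ y)
    (hyx : π.idxOf y < π.idxOf x) :
    ∃ τ : List α, IsRanking τ ∧
      (d3V π V : ℤ) - (d3V τ V : ℤ) =
        (∑ u ∈ Finset.univ.filter (fun u => π.idxOf y < π.idxOf u ∧ π.idxOf u ≤ π.idxOf x),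
          PvalM V u y) +
        ∑ p ∈ (Finset.univ ×ˢ Finset.univ).filter (fun p : α × α =>
            π.idxOf y < π.idxOf p.1 ∧ π.idxOf p.1 ≤ π.idxOf x ∧
            π.idxOf p.1 < π.idxOf p.2 ∧ p.2 ≠ y),
          TvalM V p.1 y p.2 := by
  have hPinj : ∀ a b : α, π.idxOf a = π.idxOf b → a = b :=
    fun a b h => (List.idxOf_inj (hπ.2 a)).mp h
  set k2 : α → ℤ := fun a => if a = y then 2 * (π.idxOf x : ℤ) + 1
    else 2 * (π.idxOf a : ℤ) with hk2def
  have hk2y : k2 y = 2 * (π.idxOf x : ℤ) + 1 := by simp [hk2def]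
  have hk2 : ∀ a : α, a ≠ y → k2 a = 2 * (π.idxOf a : ℤ) :=
    fun a ha => by simp [hk2def, ha]
  have hk : Function.Injective k2 := by
    intro a b h
    by_cases ha : a = y <;> by_cases hb : b = y
    · rw [ha, hb]
    · rw [ha, hk2y, hk2 b hb] at h; omega
    · rw [hb, hk2y, hk2 a ha] at h; omega
    · rw [hk2 a ha, hk2 b hb] at h
      exact hPinj a b (by omega)
  have hσR := mkList_isRanking k2
  have hσP := mkList_pairwise hk
  have hπtop : ∀ (S : Finset α) (a : α), a ∈ S →
      (∀ b ∈ S, π.idxOf a ≤ π.idxOf b) → topF π S = some a := by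
    intro S a ha hmin
    exact topF_eq_of_key hπ (pairwise_self_key hπ) ha
      (fun b hb => by exact_mod_cast Nat.cast_le.mpr (hmin b hb))
  have hσtop : ∀ (S : Finset α) (a : α), a ∈ S →
      (∀ b ∈ S, k2 a ≤ k2 b) → topF (mkList k2) S = some a :=
    fun S a ha hmin => topF_eq_of_key hσR hσP ha hmin
  refine ⟨mkList k2, hσR, ?_⟩
  rw [delta_decomp hV hπ hk hk2]
  rw [powerset_le_two_split, Finset.sum_union (disj012 _), Finset.sum_union (disj01 _)]
  have S0 : ∑ T ∈ (Finset.univ.erase y).powersetCard 0,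
      (V.map (fun v =>
        (if topF π (insert y T) ≠ topF v (insert y T) then (1:ℤ) else 0) -
        (if topF (mkList k2) (insert y T) ≠ topF v (insert y T) then (1:ℤ) else 0))).sum = 0 := by
    rw [Finset.powersetCard_zero, Finset.sum_singleton]
    have h1 : topF π (insert y (∅ : Finset α)) = some y :=
      hπtop _ y (by simp) (by intro b hb; simp at hb; subst hb; omega)
    have h2 : topF (mkList k2) (insert y (∅ : Finset α)) = some y :=
      hσtop _ y (by simp) (by intro b hb; simp at hb; subst hb; exact le_refl _)
    exact F_zero (h1.trans h2.symm) V
  have S1 : ∑ T ∈ (Finset.univ.erase y).powersetCard 1,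
      (V.map (fun v =>
        (if topF π (insert y T) ≠ topF v (insert y T) then (1:ℤ) else 0) -
        (if topF (mkList k2) (insert y T) ≠ topF v (insert y T) then (1:ℤ) else 0))).sum =
      ∑ u ∈ Finset.univ.filter (fun u => π.idxOf y < π.idxOf u ∧ π.idxOf u ≤ π.idxOf x),
        PvalM V u y := by
    rw [Finset.powersetCard_one, Finset.sum_map]
    simp only [Function.Embedding.coeFn_mk]
    have hsub : Finset.univ.filter (fun u => π.idxOf y < π.idxOf u ∧ π.idxOf u ≤ π.idxOf x)
        ⊆ Finset.univ.erase y := by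
      intro u hu
      rw [Finset.mem_filter] at hu
      refine Finset.mem_erase.mpr ⟨?_, Finset.mem_univ u⟩
      rintro rfl; omega
    rw [← Finset.sum_subset hsub]
    · apply Finset.sum_congr rfl
      intro u hu
      rw [Finset.mem_filter] at hu
      obtain ⟨-, hyu, hux⟩ := hu
      have hune : u ≠ y := by rintro rfl; omega
      simp only [Finset.pair_comm y u]
      have h1 : topF π (insert u {y}) = some y := by
        apply hπtop _ y (by simp)
        intro b hb
        simp only [Finset.mem_insert, Finset.mem_singleton] at hb
        rcases hb with rfl | rfl <;> omega
      have h2 : topF (mkList k2) (insert u {y}) = some u := by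
        apply hσtop _ u (by simp)
        intro b hb
        simp only [Finset.mem_insert, Finset.mem_singleton] at hb
        rcases hb with rfl | rfl
        · omega
        · rw [hk2y, hk2 _ hune]; omega
      rw [PvalM]
      apply sum_map_congr
      intro v hv
      simp only [h1, h2]
      exact G_pair (hV v hv) hune
    · intro u hu hnu
      rw [Finset.mem_erase] at hu
      rw [Finset.mem_filter] at hnu
      push_neg at hnu
      have hune : u ≠ y := hu.1
      have hPuy : π.idxOf u ≠ π.idxOf y := fun h => hune (hPinj u y h)
      have hcase : π.idxOf u < π.idxOf y ∨ π.idxOf x < π.idxOf u := by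
        have := hnu (Finset.mem_univ u); omega
      rcases hcase with hc | hc
      · have h1 : topF π (insert y {u}) = some u := by
          apply hπtop _ u (by simp)
          intro b hb
          simp only [Finset.mem_insert, Finset.mem_singleton] at hb
          rcases hb with rfl | rfl <;> omega
        have h2 : topF (mkList k2) (insert y {u}) = some u := by
          apply hσtop _ u (by simp)
          intro b hb
          simp only [Finset.mem_insert, Finset.mem_singleton] at hb
          rcases hb with rfl | rfl
          · rw [hk2y, hk2 u hune]; omega
          · omega
        exact F_zero (h1.trans h2.symm) V
      · have h1 : topF π (insert y {u}) = some y := by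
          apply hπtop _ y (by simp)
          intro b hb
          simp only [Finset.mem_insert, Finset.mem_singleton] at hb
          rcases hb with rfl | rfl <;> omega
        have h2 : topF (mkList k2) (insert y {u}) = some y := by
          apply hσtop _ y (by simp)
          intro b hb
          simp only [Finset.mem_insert, Finset.mem_singleton] at hb
          rcases hb with rfl | rfl
          · omega
          · rw [hk2y, hk2 b hune]; omega
        exact F_zero (h1.trans h2.symm) V
  have S2 : ∑ T ∈ (Finset.univ.erase y).powersetCard 2,
      (V.map (fun v =>
        (if topF π (insert y T) ≠ topF v (insert y T) then (1:ℤ) else 0) -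
        (if topF (mkList k2) (insert y T) ≠ topF v (insert y T) then (1:ℤ) else 0))).sum =
      ∑ p ∈ (Finset.univ ×ˢ Finset.univ).filter (fun p : α × α =>
          π.idxOf y < π.idxOf p.1 ∧ π.idxOf p.1 ≤ π.idxOf x ∧
          π.idxOf p.1 < π.idxOf p.2 ∧ p.2 ≠ y),
        TvalM V p.1 y p.2 := by
    have hbij : ∑ p ∈ ((Finset.univ.erase y) ×ˢ (Finset.univ.erase y)).filter
          (fun p : α × α => π.idxOf p.1 < π.idxOf p.2),
        (V.map (fun v =>
          (if topF π (insert y {p.1, p.2}) ≠ topF v (insert y {p.1, p.2}) then (1:ℤ) else 0) -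
          (if topF (mkList k2) (insert y {p.1, p.2}) ≠ topF v (insert y {p.1, p.2}) then (1:ℤ) else 0))).sum =
        ∑ T ∈ (Finset.univ.erase y).powersetCard 2,
        (V.map (fun v =>
          (if topF π (insert y T) ≠ topF v (insert y T) then (1:ℤ) else 0) -
          (if topF (mkList k2) (insert y T) ≠ topF v (insert y T) then (1:ℤ) else 0))).sum := by
      apply Finset.sum_bij (fun (p : α × α) _ => ({p.1, p.2} : Finset α))
      · intro p hp
        rw [Finset.mem_filter, Finset.mem_product] at hp
        rw [Finset.mem_powersetCard]
        have hne : p.1 ≠ p.2 := by rintro h; rw [h] at hp; omega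
        constructor
        · intro a ha
          simp only [Finset.mem_insert, Finset.mem_singleton] at ha
          rcases ha with rfl | rfl
          · exact hp.1.1
          · exact hp.1.2
        · exact Finset.card_pair hne
      · intro p hp q hq heq
        rw [Finset.mem_filter] at hp hq
        have hpne : p.1 ≠ p.2 := by rintro h; rw [h] at hp; omega
        have h1 : p.1 = q.1 ∨ p.1 = q.2 := by
          have : p.1 ∈ ({q.1, q.2} : Finset α) := by rw [← heq]; simp
          simpa using this
        have h2 : p.2 = q.1 ∨ p.2 = q.2 := by
          have : p.2 ∈ ({q.1, q.2} : Finset α) := by rw [← heq]; simp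
          simpa using this
        rcases h1 with e1 | e1
        · rcases h2 with e2 | e2
          · exact absurd (e1.trans e2.symm) hpne
          · exact Prod.ext e1 e2
        · rcases h2 with e2 | e2
          · exfalso
            have o1 := hp.2
            have o2 := hq.2
            rw [e1, e2] at o1
            omega
          · exact absurd (e1.trans e2.symm) hpne
      · intro T hT
        rw [Finset.mem_powersetCard] at hT
        obtain ⟨a, b, hab, rfl⟩ := Finset.card_eq_two.mp hT.2
        have ha : a ∈ Finset.univ.erase y := hT.1 (by simp)
        have hb : b ∈ Finset.univ.erase y := hT.1 (by simp)
        have hPab : π.idxOf a ≠ π.idxOf b := fun h => hab (hPinj a b h)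
        rcases Nat.lt_or_ge (π.idxOf a) (π.idxOf b) with h | h
        · exact ⟨(a, b), Finset.mem_filter.mpr ⟨Finset.mem_product.mpr ⟨ha, hb⟩, h⟩, rfl⟩
        · refine ⟨(b, a), Finset.mem_filter.mpr ⟨Finset.mem_product.mpr ⟨hb, ha⟩,
            by show π.idxOf b < π.idxOf a; omega⟩, ?_⟩
          exact (Finset.pair_comm a b).symm
      · intro p hp
        rfl
    rw [← hbij]
    have hsub : (Finset.univ ×ˢ Finset.univ).filter (fun p : α × α =>
          π.idxOf y < π.idxOf p.1 ∧ π.idxOf p.1 ≤ π.idxOf x ∧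
          π.idxOf p.1 < π.idxOf p.2 ∧ p.2 ≠ y) ⊆
        ((Finset.univ.erase y) ×ˢ (Finset.univ.erase y)).filter
          (fun p : α × α => π.idxOf p.1 < π.idxOf p.2) := by
      intro p hp
      rw [Finset.mem_filter] at hp
      obtain ⟨-, h1, h2, h3, h4⟩ := hp
      rw [Finset.mem_filter, Finset.mem_product]
      refine ⟨⟨Finset.mem_erase.mpr ⟨?_, Finset.mem_univ _⟩,
        Finset.mem_erase.mpr ⟨h4, Finset.mem_univ _⟩⟩, h3⟩
      rintro rfl; omega
    rw [← Finset.sum_subset hsub]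
    · apply Finset.sum_congr rfl
      intro p hp
      rw [Finset.mem_filter] at hp
      obtain ⟨-, hyu, hux, huw, hwy⟩ := hp
      have hune : p.1 ≠ y := by rintro h; rw [h] at hyu; omega
      have huwne : p.1 ≠ p.2 := by rintro h; rw [h] at huw; omega
      simp only [Finset.insert_comm y p.1 {p.2}]
      have h1 : topF π (insert p.1 (insert y {p.2})) = some y := by
        apply hπtop _ y (by simp)
        intro b hb
        simp only [Finset.mem_insert, Finset.mem_singleton] at hb
        rcases hb with rfl | rfl | rfl <;> omega
      have h2 : topF (mkList k2) (insert p.1 (insert y {p.2})) = some p.1 := by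
        apply hσtop _ p.1 (by simp)
        intro b hb
        simp only [Finset.mem_insert, Finset.mem_singleton] at hb
        rcases hb with rfl | rfl | rfl
        · omega
        · rw [hk2y, hk2 _ hune]; omega
        · rw [hk2 _ hune, hk2 _ hwy]; omega
      rw [TvalM]
      apply sum_map_congr
      intro v hv
      simp only [h1, h2]
      exact G_triple (hV v hv) hune huwne (fun h => hwy h.symm)
    · intro p hp hnp
      rw [Finset.mem_filter, Finset.mem_product] at hp
      obtain ⟨⟨hp1, hp2⟩, huw⟩ := hp
      rw [Finset.mem_filter] at hnp
      push_neg at hnp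
      have hune : p.1 ≠ y := (Finset.mem_erase.mp hp1).1
      have hwne : p.2 ≠ y := (Finset.mem_erase.mp hp2).1
      have hPuy : π.idxOf p.1 ≠ π.idxOf y := fun h => hune (hPinj _ _ h)
      have hcase : π.idxOf p.1 < π.idxOf y ∨ π.idxOf x < π.idxOf p.1 := by
        have := hnp (Finset.mem_product.mpr ⟨Finset.mem_univ _, Finset.mem_univ _⟩)
        by_cases hyu : π.idxOf y < π.idxOf p.1
        · have := this hyu
          by_cases hux : π.idxOf p.1 ≤ π.idxOf x
          · exact absurd hwne (by have := this hux huw; simp [this])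
          · omega
        · omega
      rcases hcase with hc | hc
      · have h1 : topF π (insert y {p.1, p.2}) = some p.1 := by
          apply hπtop _ p.1 (by simp)
          intro b hb
          simp only [Finset.mem_insert, Finset.mem_singleton] at hb
          rcases hb with rfl | rfl | rfl <;> omega
        have h2 : topF (mkList k2) (insert y {p.1, p.2}) = some p.1 := by
          apply hσtop _ p.1 (by simp)
          intro b hb
          simp only [Finset.mem_insert, Finset.mem_singleton] at hb
          rcases hb with rfl | rfl | rfl
          · rw [hk2y, hk2 _ hune]; omega
          · omega
          · rw [hk2 _ hune, hk2 _ hwne]; omega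
        exact F_zero (h1.trans h2.symm) V
      · have h1 : topF π (insert y {p.1, p.2}) = some y := by
          apply hπtop _ y (by simp)
          intro b hb
          simp only [Finset.mem_insert, Finset.mem_singleton] at hb
          rcases hb with rfl | rfl | rfl <;> omega
        have h2 : topF (mkList k2) (insert y {p.1, p.2}) = some y := by
          apply hσtop _ y (by simp)
          intro b hb
          simp only [Finset.mem_insert, Finset.mem_singleton] at hb
          rcases hb with rfl | rfl | rfl
          · omega
          · rw [hk2y, hk2 _ hune]; omega
          · rw [hk2y, hk2 _ hwne]; omega
        exact F_zero (h1.trans h2.symm) V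
  rw [S0, S1, S2]
  ring

end MoveTwo


section FiberSum
variable [DecidableEq α] [Fintype α]

lemma sum_filter_product {q1 : α → Prop} {q2 : α → α → Prop}
    [DecidablePred q1] [∀ z, DecidablePred (q2 z)] (f : α × α → ℤ) :
    ∑ p ∈ (Finset.univ ×ˢ Finset.univ).filter (fun p : α × α => q1 p.1 ∧ q2 p.1 p.2), f p =
      ∑ z ∈ Finset.univ.filter q1, ∑ t ∈ Finset.univ.filter (q2 z), f (z, t) := by
  rw [Finset.sum_filter, Finset.sum_product]
  rw [Finset.sum_filter]
  apply Finset.sum_congr rfl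
  intro z _
  by_cases h : q1 z
  · simp only [h, if_true, true_and, Finset.sum_filter]
  · simp [h]

end FiberSum

theorem stmt12 [Fintype α] [DecidableEq α]
    (V : Multiset (List α)) (hV : ∀ v ∈ V, IsRanking v)
    (x y : α) (hxy : x ≠ y)
    (hmaj : 0 < del V x y)
    (hQ : ∀ z : α, z ≠ x → z ≠ y → 0 ≤ Qq V x y z)
    (hsum : 2 * del V x y > ∑ z ∈ (Finset.univ : Finset α) \ {x, y},
      max 0 (- Pq V x y z + ∑ t ∈ (Finset.univ : Finset α) \ {x, y, z}, max 0 (Ss V y x z t))) :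
    ∀ π : List α, IsMedian3 V π → π.idxOf x < π.idxOf y := by
  intro π hπ
  by_contra hcon
  push_neg at hcon
  have hπR : IsRanking π := hπ.1
  have hPinj : ∀ a b : α, π.idxOf a = π.idxOf b → a = b :=
    fun a b h => (List.idxOf_inj (hπR.2 a)).mp h
  have heq_iff : ∀ u w : α, u = w ↔ π.idxOf u = π.idxOf w :=
    fun u w => ⟨fun h => by rw [h], hPinj u w⟩
  have hyx : π.idxOf y < π.idxOf x :=
    lt_of_le_of_ne hcon (fun h => hxy (hPinj y x h).symm)
  obtain ⟨σ, hσR, hσeq⟩ := move_one hV hπR hxy hyx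
  obtain ⟨τ, hτR, hτeq⟩ := move_two hV hπR hxy hyx
  set B := Finset.univ.filter (fun z => π.idxOf y < π.idxOf z ∧ π.idxOf z < π.idxOf x)
    with hBdef
  set D := Finset.univ.filter (fun z => π.idxOf x < π.idxOf z) with hDdef
  set prB := (Finset.univ ×ˢ Finset.univ).filter (fun p : α × α =>
      (π.idxOf y < π.idxOf p.1 ∧ π.idxOf p.1 < π.idxOf x) ∧
      (π.idxOf p.1 < π.idxOf p.2 ∧ p.2 ≠ x)) with hprBdef
  have hyB : y ∉ B := by rw [hBdef]; simp
  have hxB : x ∉ B := by rw [hBdef]; simp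
  have hBD : Disjoint B D := by
    rw [Finset.disjoint_left]
    intro a ha hb
    rw [hBdef, Finset.mem_filter] at ha
    rw [hDdef, Finset.mem_filter] at hb
    omega
  -- singles
  have hA1 : ∑ u ∈ Finset.univ.filter (fun u => π.idxOf y ≤ π.idxOf u ∧ π.idxOf u < π.idxOf x),
      PvalM V x u = PvalM V x y + ∑ z ∈ B, PvalM V x z := by
    have hU : Finset.univ.filter (fun u => π.idxOf y ≤ π.idxOf u ∧ π.idxOf u < π.idxOf x)
        = insert y B := by
      ext u
      rw [hBdef]
      simp only [Finset.mem_filter, Finset.mem_insert, Finset.mem_univ, true_and]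
      rw [heq_iff u y]
      omega
    rw [hU, Finset.sum_insert hyB]
  have hA2 : ∑ u ∈ Finset.univ.filter (fun u => π.idxOf y < π.idxOf u ∧ π.idxOf u ≤ π.idxOf x),
      PvalM V u y = PvalM V x y + ∑ z ∈ B, PvalM V z y := by
    have hU : Finset.univ.filter (fun u => π.idxOf y < π.idxOf u ∧ π.idxOf u ≤ π.idxOf x)
        = insert x B := by
      ext u
      rw [hBdef]
      simp only [Finset.mem_filter, Finset.mem_insert, Finset.mem_univ, true_and]
      rw [heq_iff u x]
      omega
    rw [hU, Finset.sum_insert hxB]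
  -- pairs from move one
  have hP1 : ∑ p ∈ (Finset.univ ×ˢ Finset.univ).filter (fun p : α × α =>
        π.idxOf y ≤ π.idxOf p.1 ∧ π.idxOf p.1 < π.idxOf x ∧
        π.idxOf p.1 < π.idxOf p.2 ∧ p.2 ≠ x),
      TvalM V x p.1 p.2 =
      (∑ w ∈ B, TvalM V x y w + ∑ w ∈ D, TvalM V x y w) + ∑ p ∈ prB, TvalM V x p.1 p.2 := by
    rw [← Finset.sum_filter_add_sum_filter_not ((Finset.univ ×ˢ Finset.univ).filter
      (fun p : α × α => π.idxOf y ≤ π.idxOf p.1 ∧ π.idxOf p.1 < π.idxOf x ∧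
        π.idxOf p.1 < π.idxOf p.2 ∧ p.2 ≠ x)) (fun p : α × α => p.1 = y)
      (fun p => TvalM V x p.1 p.2)]
    congr 1
    · have hset : ((Finset.univ ×ˢ Finset.univ).filter (fun p : α × α =>
          π.idxOf y ≤ π.idxOf p.1 ∧ π.idxOf p.1 < π.idxOf x ∧
          π.idxOf p.1 < π.idxOf p.2 ∧ p.2 ≠ x)).filter (fun p : α × α => p.1 = y)
          = {y} ×ˢ (B ∪ D) := by
        ext ⟨p1, p2⟩
        rw [hBdef, hDdef]
        simp only [Finset.mem_filter, Finset.mem_product, Finset.mem_singleton,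
          Finset.mem_union, Finset.mem_univ, true_and, and_true, ne_eq]
        rw [heq_iff p1 y, heq_iff p2 x]
        omega
      rw [hset, Finset.sum_product, Finset.sum_singleton, Finset.sum_union hBD]
    · have hset : ((Finset.univ ×ˢ Finset.univ).filter (fun p : α × α =>
          π.idxOf y ≤ π.idxOf p.1 ∧ π.idxOf p.1 < π.idxOf x ∧
          π.idxOf p.1 < π.idxOf p.2 ∧ p.2 ≠ x)).filter (fun p : α × α => ¬ p.1 = y)
          = prB := by
        ext ⟨p1, p2⟩
        rw [hprBdef]
        simp only [Finset.mem_filter, Finset.mem_product, Finset.mem_univ, true_and, ne_eq]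
        rw [heq_iff p1 y, heq_iff p2 x]
        omega
      rw [hset]
  -- pairs from move two
  have hP2 : ∑ p ∈ (Finset.univ ×ˢ Finset.univ).filter (fun p : α × α =>
        π.idxOf y < π.idxOf p.1 ∧ π.idxOf p.1 ≤ π.idxOf x ∧
        π.idxOf p.1 < π.idxOf p.2 ∧ p.2 ≠ y),
      TvalM V p.1 y p.2 =
      (∑ d ∈ D, TvalM V x y d + ∑ z ∈ B, TvalM V z y x) + ∑ p ∈ prB, TvalM V p.1 y p.2 := by
    rw [← Finset.sum_filter_add_sum_filter_not ((Finset.univ ×ˢ Finset.univ).filter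
      (fun p : α × α => π.idxOf y < π.idxOf p.1 ∧ π.idxOf p.1 ≤ π.idxOf x ∧
        π.idxOf p.1 < π.idxOf p.2 ∧ p.2 ≠ y)) (fun p : α × α => p.1 = x)
      (fun p => TvalM V p.1 y p.2)]
    rw [← Finset.sum_filter_add_sum_filter_not (((Finset.univ ×ˢ Finset.univ).filter
      (fun p : α × α => π.idxOf y < π.idxOf p.1 ∧ π.idxOf p.1 ≤ π.idxOf x ∧
        π.idxOf p.1 < π.idxOf p.2 ∧ p.2 ≠ y)).filter (fun p : α × α => ¬ p.1 = x))
      (fun p : α × α => p.2 = x) (fun p => TvalM V p.1 y p.2)]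
    have t1 : ((Finset.univ ×ˢ Finset.univ).filter (fun p : α × α =>
        π.idxOf y < π.idxOf p.1 ∧ π.idxOf p.1 ≤ π.idxOf x ∧
        π.idxOf p.1 < π.idxOf p.2 ∧ p.2 ≠ y)).filter (fun p : α × α => p.1 = x)
        = {x} ×ˢ D := by
      ext ⟨p1, p2⟩
      rw [hDdef]
      simp only [Finset.mem_filter, Finset.mem_product, Finset.mem_singleton,
        Finset.mem_univ, true_and, and_true, ne_eq]
      rw [heq_iff p1 x, heq_iff p2 y]
      omega
    have t2 : (((Finset.univ ×ˢ Finset.univ).filter (fun p : α × α =>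
        π.idxOf y < π.idxOf p.1 ∧ π.idxOf p.1 ≤ π.idxOf x ∧
        π.idxOf p.1 < π.idxOf p.2 ∧ p.2 ≠ y)).filter (fun p : α × α => ¬ p.1 = x)).filter
        (fun p : α × α => p.2 = x) = B ×ˢ {x} := by
      ext ⟨p1, p2⟩
      rw [hBdef]
      simp only [Finset.mem_filter, Finset.mem_product, Finset.mem_singleton,
        Finset.mem_univ, true_and, and_true, ne_eq]
      rw [heq_iff p1 x, heq_iff p2 y, heq_iff p2 x]
      omega
    have t3 : (((Finset.univ ×ˢ Finset.univ).filter (fun p : α × α =>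
        π.idxOf y < π.idxOf p.1 ∧ π.idxOf p.1 ≤ π.idxOf x ∧
        π.idxOf p.1 < π.idxOf p.2 ∧ p.2 ≠ y)).filter (fun p : α × α => ¬ p.1 = x)).filter
        (fun p : α × α => ¬ p.2 = x) = prB := by
      ext ⟨p1, p2⟩
      rw [hprBdef]
      simp only [Finset.mem_filter, Finset.mem_product, Finset.mem_univ, true_and, ne_eq]
      rw [heq_iff p1 x, heq_iff p2 y, heq_iff p2 x]
      omega
    rw [t1, t2, t3, Finset.sum_product, Finset.sum_singleton, Finset.sum_product]
    simp only [Finset.sum_singleton]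
    ring
  -- combine
  have E1 : ((d3V π V : ℤ) - d3V σ V) + ((d3V π V : ℤ) - d3V τ V)
      = 2 * PvalM V x y
        + ∑ z ∈ B, (PvalM V x z + PvalM V z y + TvalM V x y z + TvalM V z y x)
        + 2 * ∑ d ∈ D, TvalM V x y d
        + ∑ p ∈ prB, (TvalM V x p.1 p.2 + TvalM V p.1 y p.2) := by
    rw [hσeq, hτeq, hA1, hA2, hP1, hP2]
    rw [Finset.sum_add_distrib, Finset.sum_add_distrib, Finset.sum_add_distrib,
      Finset.sum_add_distrib]
    ring
  -- bounds
  have hBR : ∑ z ∈ B, (PvalM V x z + PvalM V z y + TvalM V x y z + TvalM V z y x)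
      = ∑ z ∈ B, Pq V x y z := by
    apply Finset.sum_congr rfl
    intro z hz
    rw [hBdef, Finset.mem_filter] at hz
    have hzx : x ≠ z := by rintro rfl; omega
    have hzy : y ≠ z := by rintro rfl; omega
    exact bracket_eq hV hxy hzx hzy
  have hQD : 0 ≤ ∑ d ∈ D, TvalM V x y d := by
    apply Finset.sum_nonneg
    intro d hd
    rw [hDdef, Finset.mem_filter] at hd
    have hdx : d ≠ x := by rintro rfl; omega
    have hdy : d ≠ y := by rintro rfl; omega
    rw [TvalM_eq_Qq hV hxy (fun h => hdx h.symm) (fun h => hdy h.symm)]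
    exact hQ d hdx hdy
  have hprBb : ∑ p ∈ prB, (- max 0 (Ss V y x p.1 p.2))
      ≤ ∑ p ∈ prB, (TvalM V x p.1 p.2 + TvalM V p.1 y p.2) := by
    apply Finset.sum_le_sum
    intro p hp
    obtain ⟨p1, p2⟩ := p
    rw [hprBdef, Finset.mem_filter] at hp
    dsimp only at hp ⊢
    obtain ⟨-, ⟨h1, h2⟩, h3, h4⟩ := hp
    have hxz : x ≠ p1 := by rintro rfl; omega
    have hxt : x ≠ p2 := fun h => h4 h.symm
    have hyz : y ≠ p1 := by rintro rfl; omega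
    have hyt : y ≠ p2 := by rintro rfl; omega
    have hzt : p1 ≠ p2 := by rintro rfl; omega
    have hq := quad_bound hV hxy hxz hxt hyz hyt hzt
    have hm : Ss V y x p1 p2 ≤ max 0 (Ss V y x p1 p2) := le_max_right _ _
    linarith
  have hfib : ∑ p ∈ prB, (- max 0 (Ss V y x p.1 p.2)) =
      ∑ z ∈ B, ∑ t ∈ Finset.univ.filter
        (fun t => π.idxOf z < π.idxOf t ∧ t ≠ x), (- max 0 (Ss V y x z t)) := by
    rw [hprBdef, hBdef]
    exact sum_filter_product
      (q1 := fun z => π.idxOf y < π.idxOf z ∧ π.idxOf z < π.idxOf x)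
      (q2 := fun z t => π.idxOf z < π.idxOf t ∧ t ≠ x)
      (fun p => - max 0 (Ss V y x p.1 p.2))
  have hin : ∀ z ∈ B, - (∑ t ∈ (Finset.univ : Finset α) \ {x, y, z}, max 0 (Ss V y x z t))
      ≤ ∑ t ∈ Finset.univ.filter (fun t => π.idxOf z < π.idxOf t ∧ t ≠ x),
        (- max 0 (Ss V y x z t)) := by
    intro z hz
    rw [hBdef, Finset.mem_filter] at hz
    rw [Finset.sum_neg_distrib]
    apply neg_le_neg
    apply Finset.sum_le_sum_of_subset_of_nonneg
    · intro t ht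
      rw [Finset.mem_filter] at ht
      rw [Finset.mem_sdiff]
      refine ⟨Finset.mem_univ t, ?_⟩
      intro hmem
      simp only [Finset.mem_insert, Finset.mem_singleton] at hmem
      rcases hmem with rfl | rfl | rfl
      · exact ht.2.2 rfl
      · omega
      · omega
    · intro t _ _
      exact le_max_left _ _
  have hsum_in : ∑ z ∈ B, (- (∑ t ∈ (Finset.univ : Finset α) \ {x, y, z}, max 0 (Ss V y x z t)))
      ≤ ∑ z ∈ B, ∑ t ∈ Finset.univ.filter
        (fun t => π.idxOf z < π.idxOf t ∧ t ≠ x), (- max 0 (Ss V y x z t)) :=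
    Finset.sum_le_sum hin
  have hPqz : ∑ z ∈ B, (- max 0 (- Pq V x y z +
        ∑ t ∈ (Finset.univ : Finset α) \ {x, y, z}, max 0 (Ss V y x z t)))
      ≤ ∑ z ∈ B, (Pq V x y z -
        ∑ t ∈ (Finset.univ : Finset α) \ {x, y, z}, max 0 (Ss V y x z t)) := by
    apply Finset.sum_le_sum
    intro z _
    have := le_max_right (0:ℤ) (- Pq V x y z +
      ∑ t ∈ (Finset.univ : Finset α) \ {x, y, z}, max 0 (Ss V y x z t))
    linarith
  have hsubB : ∑ z ∈ B, max 0 (- Pq V x y z +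
        ∑ t ∈ (Finset.univ : Finset α) \ {x, y, z}, max 0 (Ss V y x z t))
      ≤ ∑ z ∈ (Finset.univ : Finset α) \ {x, y}, max 0 (- Pq V x y z +
        ∑ t ∈ (Finset.univ : Finset α) \ {x, y, z}, max 0 (Ss V y x z t)) := by
    apply Finset.sum_le_sum_of_subset_of_nonneg
    · intro z hz
      rw [hBdef, Finset.mem_filter] at hz
      rw [Finset.mem_sdiff]
      refine ⟨Finset.mem_univ z, ?_⟩
      intro hmem
      simp only [Finset.mem_insert, Finset.mem_singleton] at hmem
      rcases hmem with rfl | rfl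
      · omega
      · omega
    · intro z _ _
      exact le_max_left _ _
  have hdel : del V x y = PvalM V x y := (PvalM_eq_del V x y).symm
  have hm1c : (d3V π V : ℤ) - d3V σ V ≤ 0 :=
    sub_nonpos.mpr (Nat.cast_le.mpr (hπ.2 σ hσR))
  have hm2c : (d3V π V : ℤ) - d3V τ V ≤ 0 :=
    sub_nonpos.mpr (Nat.cast_le.mpr (hπ.2 τ hτR))
  have hneg1 : ∑ z ∈ B, (- max 0 (- Pq V x y z +
        ∑ t ∈ (Finset.univ : Finset α) \ {x, y, z}, max 0 (Ss V y x z t)))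
      = - ∑ z ∈ B, max 0 (- Pq V x y z +
        ∑ t ∈ (Finset.univ : Finset α) \ {x, y, z}, max 0 (Ss V y x z t)) :=
    Finset.sum_neg_distrib _
  have hneg2 : ∑ z ∈ B, (- (∑ t ∈ (Finset.univ : Finset α) \ {x, y, z}, max 0 (Ss V y x z t)))
      = - ∑ z ∈ B, (∑ t ∈ (Finset.univ : Finset α) \ {x, y, z}, max 0 (Ss V y x z t)) :=
    Finset.sum_neg_distrib _
  have hsubd : ∑ z ∈ B, (Pq V x y z -
        ∑ t ∈ (Finset.univ : Finset α) \ {x, y, z}, max 0 (Ss V y x z t))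
      = ∑ z ∈ B, Pq V x y z -
        ∑ z ∈ B, (∑ t ∈ (Finset.univ : Finset α) \ {x, y, z}, max 0 (Ss V y x z t)) :=
    Finset.sum_sub_distrib _ _
  rw [hdel] at hsum
  linarith [hsum, E1, hBR, hQD, hprBb, hfib, hsum_in, hPqz, hsubB, hm1c, hm2c, hneg1, hneg2, hsubd]
end

section
/- Let π* be a 3-wise median of an election with voting profile V over a finite set C of alternatives, and let x, y be two alternatives occupying consecutive positions in π*. If δ_{xy} > Σ_{z ∈ C∖{x,y}} max(0, Q_{y,x,z}), then x is ranked before y in π*. -/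
open Finset

variable {α : Type}

section Helpers13
variable [DecidableEq α]

/-- idxOf commutes with mapping an injective function. -/
lemma idx_map (f : α → α) (hf : Function.Injective f) (l : List α) (a : α) :
    (l.map f).idxOf (f a) = l.idxOf a := by
  induction l with
  | nil => rfl
  | cons b t ih =>
    simp only [List.map_cons, List.idxOf_cons]
    by_cases h : b = a
    · subst h; simp
    · have h2 : f b ≠ f a := fun e => h (hf e)
      simp [h, h2, ih, beq_eq_false_iff_ne, Bool.cond_eq_ite, if_neg]

lemma idx_inj (l : List α) (hl : IsRanking l) {a b : α}
    (h : l.idxOf a = l.idxOf b) : a = b :=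
  (List.idxOf_inj (hl.2 a)).1 h

def TopOf (l : List α) (S : Finset α) (a : α) : Prop :=
  a ∈ S ∧ ∀ c ∈ S, l.idxOf a ≤ l.idxOf c

lemma top_exists (l : List α) {S : Finset α} (hS : S.Nonempty) :
    ∃ a, TopOf l S a := by
  obtain ⟨a, ha, h⟩ := S.exists_min_image (fun c => l.idxOf c) hS
  exact ⟨a, ha, h⟩

lemma topUniq (l : List α) (hl : IsRanking l) {S : Finset α} {a b : α}
    (ha : TopOf l S a) (hb : TopOf l S b) : a = b :=
  idx_inj l hl (le_antisymm (ha.2 b hb.1) (hb.2 a ha.1))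

lemma cond_iff (l v : List α) (hl : IsRanking l) (hv : IsRanking v)
    {S : Finset α} {a b : α} (ha : TopOf l S a) (hb : TopOf v S b) :
    ((∃ a' ∈ S, ∃ b' ∈ S, a' ≠ b' ∧ (∀ c ∈ S, l.idxOf a' ≤ l.idxOf c) ∧
      (∀ c ∈ S, v.idxOf b' ≤ v.idxOf c)) ↔ a ≠ b) := by
  constructor
  · rintro ⟨a', ha', b', hb', hne, h1, h2⟩
    rwa [topUniq l hl ⟨ha', h1⟩ ha, topUniq v hv ⟨hb', h2⟩ hb] at hne
  · intro h
    exact ⟨a, ha.1, b, hb.1, h, ha.2, hb.2⟩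

lemma ranking_map_swap (π : List α) (x y : α) (hπ : IsRanking π) :
    IsRanking (π.map (Equiv.swap x y)) := by
  refine ⟨hπ.1.map (Equiv.swap x y).injective, fun a => ?_⟩
  exact List.mem_map.2 ⟨Equiv.swap x y a, hπ.2 _, Equiv.swap_apply_self x y a⟩

lemma idx_map_swap (π : List α) (x y a : α) :
    (π.map (Equiv.swap x y)).idxOf a = π.idxOf (Equiv.swap x y a) := by
  conv_lhs => rw [show a = Equiv.swap x y (Equiv.swap x y a) from (Equiv.swap_apply_self x y a).symm]
  exact idx_map _ (Equiv.swap x y).injective π _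

/-- If `a` is the top of `S` in `π` and we are not in the special case
(`x, y ∈ S` with `a = y`), then `a` is still the top of `S` after swapping
the adjacent `y` (at position `p`) and `x` (at position `p+1`). -/
lemma top_swap (π : List α) (hπ : IsRanking π) (x y : α) (hxy : x ≠ y)
    (hx : π.idxOf x = π.idxOf y + 1)
    {S : Finset α} {a : α} (ha : TopOf π S a)
    (hnot : ¬(x ∈ S ∧ y ∈ S ∧ a = y)) :
    TopOf (π.map (Equiv.swap x y)) S a := by
  set p := π.idxOf y with hp
  have hidx : ∀ c : α, (π.map (Equiv.swap x y)).idxOf c = π.idxOf (Equiv.swap x y c) :=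
    fun c => idx_map_swap π x y c
  have hix : (π.map (Equiv.swap x y)).idxOf x = p := by
    rw [hidx, Equiv.swap_apply_left]
  have hiy : (π.map (Equiv.swap x y)).idxOf y = p + 1 := by
    rw [hidx, Equiv.swap_apply_right, hx]
  have hiz : ∀ c : α, c ≠ x → c ≠ y → (π.map (Equiv.swap x y)).idxOf c = π.idxOf c := by
    intro c h1 h2; rw [hidx, Equiv.swap_apply_of_ne_of_ne h1 h2]
  refine ⟨ha.1, fun c hc => ?_⟩
  by_cases hax : a = x
  · have hyS : y ∉ S := fun hyS => by
      have := ha.2 y hyS; rw [hax, hx] at this; omega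
    rw [hax, hix]
    by_cases hcx : c = x
    · rw [hcx, hix]
    · have hcy : c ≠ y := fun h => hyS (h ▸ hc)
      rw [hiz c hcx hcy]
      have := ha.2 c hc; rw [hax, hx] at this; omega
  · by_cases hay : a = y
    · have hxS : x ∉ S := fun hxS => hnot ⟨hxS, hay ▸ ha.1, hay⟩
      rw [hay, hiy]
      by_cases hcy : c = y
      · rw [hcy, hiy]
      · have hcx : c ≠ x := fun h => hxS (h ▸ hc)
        rw [hiz c hcx hcy]
        have h1 := ha.2 c hc
        rw [hay] at h1
        have h2 : π.idxOf c ≠ p := fun h => hcy (idx_inj π hπ (by rw [h, hp]))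
        omega
    · rw [hiz a hax hay]
      by_cases hcx : c = x
      · rw [hcx, hix]
        have h1 := ha.2 c hc
        rw [hcx, hx] at h1
        have h2 : π.idxOf a ≠ π.idxOf x := fun h => hax (idx_inj π hπ h)
        rw [hx] at h2
        omega
      · by_cases hcy : c = y
        · rw [hcy, hiy]
          have h1 := ha.2 c hc; rw [hcy] at h1
          omega
        · rw [hiz c hcx hcy]
          exact ha.2 c hc

lemma memT (π : List α) (hπ : IsRanking π) (x y : α) (hxy : x ≠ y)
    {S : Finset α} (h3 : S.card ≤ 3) (hx : x ∈ S) (hy : y ∈ S)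
    (htop : TopOf π S y) :
    S = {x, y} ∨ ∃ z, z ≠ x ∧ z ≠ y ∧ π.idxOf y < π.idxOf z ∧ S = {x, y, z} := by
  have hsub : ({x, y} : Finset α) ⊆ S := by
    intro c hc; simp only [Finset.mem_insert, Finset.mem_singleton] at hc
    rcases hc with rfl | rfl <;> assumption
  have hcard2 : ({x, y} : Finset α).card = 2 := Finset.card_pair hxy
  have h2 : 2 ≤ S.card := by
    have := Finset.card_le_card hsub; omega
  by_cases hc2 : S.card ≤ 2
  · left
    exact (Finset.eq_of_subset_of_card_le hsub (by omega)).symm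
  · right
    have hc3 : S.card = 3 := by omega
    have hsd : (S \ {x, y}).card = 1 := by
      rw [Finset.card_sdiff_of_subset hsub]; omega
    obtain ⟨z, hz⟩ := Finset.card_eq_one.1 hsd
    have hzmem : z ∈ S \ {x, y} := hz ▸ Finset.mem_singleton_self z
    rw [Finset.mem_sdiff, Finset.mem_insert, Finset.mem_singleton] at hzmem
    obtain ⟨hzS, hznot⟩ := hzmem
    push_neg at hznot
    refine ⟨z, hznot.1, hznot.2, ?_, ?_⟩
    · have hle := htop.2 z hzS
      have : π.idxOf z ≠ π.idxOf y := fun h => hznot.2 (idx_inj π hπ h)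
      omega
    · have : S = {x, y} ∪ (S \ {x, y}) := by
        rw [Finset.union_sdiff_of_subset hsub]
      rw [this, hz]
      ext c; simp [or_assoc]

lemma sum_map_ind (V : Multiset (List α)) (p : List α → Prop) [DecidablePred p] :
    (V.map fun v => if p v then (1 : ℤ) else 0).sum = (V.countP p : ℤ) := by
  induction V using Multiset.induction with
  | empty => simp
  | cons a s ih =>
    simp only [Multiset.map_cons, Multiset.sum_cons, Multiset.countP_cons, ih]
    push_cast
    split <;> ring

lemma countP_split (V : Multiset (List α)) (p q r : List α → Prop)
    [DecidablePred p] [DecidablePred q] [DecidablePred r]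
    (h : ∀ v ∈ V, p v ↔ (q v ∨ r v)) (h2 : ∀ v ∈ V, ¬(q v ∧ r v)) :
    V.countP p = V.countP q + V.countP r := by
  induction V using Multiset.induction with
  | empty => simp
  | cons a s ih =>
    simp only [Multiset.countP_cons]
    rw [ih (fun v hv => h v (Multiset.mem_cons_of_mem hv))
        (fun v hv => h2 v (Multiset.mem_cons_of_mem hv))]
    have hpa := h a (Multiset.mem_cons_self a s)
    have h2a := h2 a (Multiset.mem_cons_self a s)
    by_cases hq : q a <;> by_cases hr : r a <;>
      simp [hq, hr, hpa, iff_iff_implies_and_implies] at * <;> omega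

lemma sum_map_finsum (V : Multiset (List α)) (Z : Finset α) (g : List α → α → ℤ) :
    (V.map fun v => ∑ z ∈ Z, g v z).sum = ∑ z ∈ Z, (V.map fun v => g v z).sum := by
  induction V using Multiset.induction with
  | empty => simp
  | cons a s ih => simp [ih, Finset.sum_add_distrib]

lemma pervote [Fintype α] (π : List α) (hπ : IsRanking π) (x y : α) (hxy : x ≠ y)
    (hx : π.idxOf x = π.idxOf y + 1)
    (v : List α) (hv : IsRanking v) :
    (d3 π v : ℤ) - (d3 (π.map (Equiv.swap x y)) v : ℤ) =
      ((if v.idxOf x < v.idxOf y then (1:ℤ) else 0) -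
       (if v.idxOf y < v.idxOf x then (1:ℤ) else 0)) +
      ∑ z ∈ (Finset.univ \ ({x, y} : Finset α)).filter (fun z => π.idxOf y < π.idxOf z),
        ((if v.idxOf x < v.idxOf y ∧ v.idxOf x < v.idxOf z then (1:ℤ) else 0) -
         (if v.idxOf y < v.idxOf x ∧ v.idxOf y < v.idxOf z then (1:ℤ) else 0)) := by
  classical
  set π' := π.map (Equiv.swap x y) with hπ'def
  have hπ'r : IsRanking π' := ranking_map_swap π x y hπ
  have hix' : π'.idxOf x = π.idxOf y := by
    rw [hπ'def, idx_map_swap, Equiv.swap_apply_left]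
  have hiy' : π'.idxOf y = π.idxOf y + 1 := by
    rw [hπ'def, idx_map_swap, Equiv.swap_apply_right, hx]
  have hiz' : ∀ c, c ≠ x → c ≠ y → π'.idxOf c = π.idxOf c := fun c h1 h2 => by
    rw [hπ'def, idx_map_swap, Equiv.swap_apply_of_ne_of_ne h1 h2]
  set Z := (Finset.univ \ ({x, y} : Finset α)).filter (fun z => π.idxOf y < π.idxOf z)
    with hZ
  have hd3 : ∀ l : List α, (d3 l v : ℤ) =
      ∑ S ∈ (Finset.univ : Finset α).powerset,
        (if (S.card ≤ 3 ∧ ∃ a ∈ S, ∃ b ∈ S, a ≠ b ∧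
          (∀ c ∈ S, l.idxOf a ≤ l.idxOf c) ∧ (∀ c ∈ S, v.idxOf b ≤ v.idxOf c))
          then (1:ℤ) else 0) := by
    intro l
    unfold d3
    rw [Finset.card_filter]
    push_cast
    rfl
  rw [hd3 π, hd3 π', ← Finset.sum_sub_distrib]
  set f : Finset α → ℤ := fun S =>
    (if (S.card ≤ 3 ∧ ∃ a ∈ S, ∃ b ∈ S, a ≠ b ∧
      (∀ c ∈ S, π.idxOf a ≤ π.idxOf c) ∧ (∀ c ∈ S, v.idxOf b ≤ v.idxOf c))
      then (1:ℤ) else 0) -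
    (if (S.card ≤ 3 ∧ ∃ a ∈ S, ∃ b ∈ S, a ≠ b ∧
      (∀ c ∈ S, π'.idxOf a ≤ π'.idxOf c) ∧ (∀ c ∈ S, v.idxOf b ≤ v.idxOf c))
      then (1:ℤ) else 0) with hf
  set T : Finset (Finset α) := insert {x, y} (Z.image fun z => ({x, y, z} : Finset α)) with hT
  have hTsub : T ⊆ (Finset.univ : Finset α).powerset :=
    fun S _ => Finset.mem_powerset.2 (Finset.subset_univ S)
  have hvanish : ∀ S ∈ (Finset.univ : Finset α).powerset, S ∉ T → f S = 0 := by
    intro S _ hST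
    simp only [hf]
    by_cases h3 : S.card ≤ 3
    swap
    · simp [h3]
    rcases S.eq_empty_or_nonempty with rfl | hne
    · simp
    obtain ⟨a, ha⟩ := top_exists π hne
    obtain ⟨b, hb⟩ := top_exists v hne
    have hnot : ¬(x ∈ S ∧ y ∈ S ∧ a = y) := by
      rintro ⟨hxS, hyS, hay⟩
      rcases memT π hπ x y hxy h3 hxS hyS (hay ▸ ha) with h | ⟨z, hz1, hz2, hz3, h⟩
      · exact hST (h ▸ Finset.mem_insert_self _ _)
      · refine hST (h ▸ Finset.mem_insert_of_mem (Finset.mem_image.2 ⟨z, ?_, rfl⟩))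
        rw [hZ, Finset.mem_filter, Finset.mem_sdiff]
        exact ⟨⟨Finset.mem_univ z, by simp [hz1, hz2]⟩, hz3⟩
    have ha' := top_swap π hπ x y hxy hx ha hnot
    simp only [sub_eq_zero]
    have e1 := cond_iff π v hπ hv ha hb
    have e2 := cond_iff π' v hπ'r hv ha' hb
    have hiff : (S.card ≤ 3 ∧ ∃ a ∈ S, ∃ b ∈ S, a ≠ b ∧
        (∀ c ∈ S, π.idxOf a ≤ π.idxOf c) ∧ (∀ c ∈ S, v.idxOf b ≤ v.idxOf c)) ↔
        (S.card ≤ 3 ∧ ∃ a ∈ S, ∃ b ∈ S, a ≠ b ∧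
        (∀ c ∈ S, π'.idxOf a ≤ π'.idxOf c) ∧ (∀ c ∈ S, v.idxOf b ≤ v.idxOf c)) :=
      and_congr_right fun _ => e1.trans e2.symm
    simp only [hiff]
  rw [← Finset.sum_subset hTsub hvanish]
  have hxyZ : ∀ z ∈ Z, z ≠ x ∧ z ≠ y ∧ π.idxOf y < π.idxOf z := by
    intro z hz
    rw [hZ, Finset.mem_filter, Finset.mem_sdiff, Finset.mem_insert, Finset.mem_singleton] at hz
    push_neg at hz
    exact ⟨hz.1.2.1, hz.1.2.2, hz.2⟩
  have hpairnot : ({x, y} : Finset α) ∉ Z.image fun z => ({x, y, z} : Finset α) := by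
    intro h
    obtain ⟨z, hzZ, hzeq⟩ := Finset.mem_image.1 h
    obtain ⟨hz1, hz2, _⟩ := hxyZ z hzZ
    have hc2 : ({x, y} : Finset α).card = 2 := Finset.card_pair hxy
    have hc3 : ({x, y, z} : Finset α).card = 3 := by
      rw [Finset.card_insert_of_notMem (by simp [hxy, Ne.symm hz1]),
        Finset.card_pair (Ne.symm hz2)]
    rw [hzeq] at hc3; omega
  have hinj : ∀ z1 ∈ Z, ∀ z2 ∈ Z, ({x, y, z1} : Finset α) = {x, y, z2} → z1 = z2 := by
    intro z1 hz1 z2 hz2 h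
    obtain ⟨h11, h12, _⟩ := hxyZ z1 hz1
    have : z1 ∈ ({x, y, z2} : Finset α) := h ▸ (by simp)
    simp only [Finset.mem_insert, Finset.mem_singleton] at this
    rcases this with h' | h' | h' <;> first | exact absurd h' h11 | exact absurd h' h12 | exact h'
  rw [Finset.sum_insert hpairnot, Finset.sum_image hinj]
  have hvinj : ∀ a b : α, v.idxOf a = v.idxOf b → a = b := fun a b h => idx_inj v hv h
  -- evaluate the pair term
  have hpair : f {x, y} = (if v.idxOf x < v.idxOf y then (1:ℤ) else 0) -
      (if v.idxOf y < v.idxOf x then (1:ℤ) else 0) := by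
    have hcard : ({x, y} : Finset α).card ≤ 3 := by
      rw [Finset.card_pair hxy]; omega
    have topπ : TopOf π {x, y} y := by
      refine ⟨by simp, fun c hc => ?_⟩
      simp only [Finset.mem_insert, Finset.mem_singleton] at hc
      rcases hc with rfl | rfl
      · rw [hx]; omega
      · exact le_refl _
    have topπ' : TopOf π' {x, y} x := by
      refine ⟨by simp, fun c hc => ?_⟩
      simp only [Finset.mem_insert, Finset.mem_singleton] at hc
      rcases hc with rfl | rfl
      · exact le_refl _
      · rw [hix', hiy']; omega
    have hvxy : v.idxOf x ≠ v.idxOf y := fun h => hxy (hvinj _ _ h)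
    simp only [hf]
    rcases lt_or_gt_of_ne hvxy with h | h
    · have topv : TopOf v {x, y} x := by
        refine ⟨by simp, fun c hc => ?_⟩
        simp only [Finset.mem_insert, Finset.mem_singleton] at hc
        rcases hc with rfl | rfl
        · exact le_refl _
        · exact le_of_lt h
      have hEx1 := (cond_iff π v hπ hv topπ topv).2 (Ne.symm hxy)
      have hEx2 : _ := fun hEx => ((cond_iff π' v hπ'r hv topπ' topv).1 hEx) rfl
      rw [if_pos (And.intro hcard hEx1), if_neg (mt And.right hEx2),
        if_pos h, if_neg ((by omega : ¬(v.idxOf y < v.idxOf x)))]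
    · have topv : TopOf v {x, y} y := by
        refine ⟨by simp, fun c hc => ?_⟩
        simp only [Finset.mem_insert, Finset.mem_singleton] at hc
        rcases hc with rfl | rfl
        · exact le_of_lt h
        · exact le_refl _
      have hEx1 : _ := fun hEx => ((cond_iff π v hπ hv topπ topv).1 hEx) rfl
      have hEx2 := (cond_iff π' v hπ'r hv topπ' topv).2 hxy
      rw [if_neg (mt And.right hEx1), if_pos (And.intro hcard hEx2),
        if_neg ((by omega : ¬(v.idxOf x < v.idxOf y))), if_pos h]
  rw [hpair]
  congr 1
  refine Finset.sum_congr rfl fun z hz => ?_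
  obtain ⟨hz1, hz2, hz3⟩ := hxyZ z hz
  have hcard3 : ({x, y, z} : Finset α).card ≤ 3 := by
    rw [Finset.card_insert_of_notMem (by simp [hxy, Ne.symm hz1]),
      Finset.card_pair (Ne.symm hz2)]
  have topπ3 : TopOf π {x, y, z} y := by
    refine ⟨by simp, fun c hc => ?_⟩
    simp only [Finset.mem_insert, Finset.mem_singleton] at hc
    rcases hc with rfl | rfl | rfl
    · rw [hx]; omega
    · exact le_refl _
    · exact le_of_lt hz3
  have topπ'3 : TopOf π' {x, y, z} x := by
    refine ⟨by simp, fun c hc => ?_⟩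
    simp only [Finset.mem_insert, Finset.mem_singleton] at hc
    rcases hc with rfl | rfl | rfl
    · exact le_refl _
    · rw [hix', hiy']; omega
    · rw [hix', hiz' c hz1 hz2]; exact le_of_lt hz3
  have hvxy : v.idxOf x ≠ v.idxOf y := fun h => hxy (hvinj _ _ h)
  have hvxz : v.idxOf x ≠ v.idxOf z := fun h => hz1 (hvinj _ _ h).symm
  have hvyz : v.idxOf y ≠ v.idxOf z := fun h => hz2 (hvinj _ _ h).symm
  simp only [hf]
  by_cases hX : v.idxOf x < v.idxOf y ∧ v.idxOf x < v.idxOf z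
  · have topv : TopOf v {x, y, z} x := by
      refine ⟨by simp, fun c hc => ?_⟩
      simp only [Finset.mem_insert, Finset.mem_singleton] at hc
      rcases hc with rfl | rfl | rfl
      · exact le_refl _
      · exact le_of_lt hX.1
      · exact le_of_lt hX.2
    have hEx1 := (cond_iff π v hπ hv topπ3 topv).2 (Ne.symm hxy)
    have hEx2 : _ := fun hEx => ((cond_iff π' v hπ'r hv topπ'3 topv).1 hEx) rfl
    rw [if_pos (And.intro hcard3 hEx1), if_neg (mt And.right hEx2),
      if_pos hX,
      if_neg ((by omega : ¬(v.idxOf y < v.idxOf x ∧ v.idxOf y < v.idxOf z)))]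
  · by_cases hY : v.idxOf y < v.idxOf x ∧ v.idxOf y < v.idxOf z
    · have topv : TopOf v {x, y, z} y := by
        refine ⟨by simp, fun c hc => ?_⟩
        simp only [Finset.mem_insert, Finset.mem_singleton] at hc
        rcases hc with rfl | rfl | rfl
        · exact le_of_lt hY.1
        · exact le_refl _
        · exact le_of_lt hY.2
      have hEx1 : _ := fun hEx => ((cond_iff π v hπ hv topπ3 topv).1 hEx) rfl
      have hEx2 := (cond_iff π' v hπ'r hv topπ'3 topv).2 hxy
      rw [if_neg (mt And.right hEx1), if_pos (And.intro hcard3 hEx2),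
        if_neg ((by omega : ¬(v.idxOf x < v.idxOf y ∧ v.idxOf x < v.idxOf z))),
        if_pos hY]
    · have hZtop : v.idxOf z < v.idxOf x ∧ v.idxOf z < v.idxOf y := by omega
      have topv : TopOf v {x, y, z} z := by
        refine ⟨by simp, fun c hc => ?_⟩
        simp only [Finset.mem_insert, Finset.mem_singleton] at hc
        rcases hc with rfl | rfl | rfl
        · exact le_of_lt hZtop.1
        · exact le_of_lt hZtop.2
        · exact le_refl _
      have hEx1 := (cond_iff π v hπ hv topπ3 topv).2 (fun h => hz2 h.symm)
      have hEx2 := (cond_iff π' v hπ'r hv topπ'3 topv).2 (fun h => hz1 h.symm)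
      rw [if_pos (And.intro hcard3 hEx1), if_pos (And.intro hcard3 hEx2),
        if_neg ((by omega : ¬(v.idxOf x < v.idxOf y ∧ v.idxOf x < v.idxOf z))),
        if_neg ((by omega : ¬(v.idxOf y < v.idxOf x ∧ v.idxOf y < v.idxOf z)))]
      norm_num

end Helpers13

theorem stmt13 [Fintype α] [DecidableEq α]
    (V : Multiset (List α)) (hV : ∀ v ∈ V, IsRanking v)
    (π : List α) (hπ : IsMedian3 V π)
    (x y : α) (hxy : x ≠ y)
    (hcons : π.idxOf y = π.idxOf x + 1 ∨ π.idxOf x = π.idxOf y + 1)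
    (hδ : ∑ z ∈ (Finset.univ : Finset α) \ {x, y}, max 0 (Qq V y x z) < del V x y) :
    π.idxOf x < π.idxOf y := by
  by_contra hlt
  push_neg at hlt
  have hx : π.idxOf x = π.idxOf y + 1 := by
    rcases hcons with h | h
    · omega
    · exact h
  set π' := π.map (Equiv.swap x y) with hπ'def
  have hπ'r : IsRanking π' := ranking_map_swap π x y hπ.1
  set Z := (Finset.univ \ ({x, y} : Finset α)).filter (fun z => π.idxOf y < π.idxOf z)
    with hZ
  have key : (d3V π V : ℤ) - (d3V π' V : ℤ) =
      ((V.countP (fun v => v.idxOf x < v.idxOf y) : ℤ) -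
        (V.countP (fun v => v.idxOf y < v.idxOf x) : ℤ)) +
      ∑ z ∈ Z,
        ((V.countP (fun v => v.idxOf x < v.idxOf y ∧ v.idxOf x < v.idxOf z) : ℤ) -
         (V.countP (fun v => v.idxOf y < v.idxOf x ∧ v.idxOf y < v.idxOf z) : ℤ)) := by
    have cast1 : (d3V π V : ℤ) - (d3V π' V : ℤ) =
        (V.map fun v => (d3 π v : ℤ) - (d3 π' v : ℤ)).sum := by
      simp only [d3V, Multiset.sum_map_sub, Nat.cast_multiset_sum, Multiset.map_map,
        Function.comp]
    rw [cast1,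
      Multiset.map_congr rfl fun v hv => pervote π hπ.1 x y hxy hx v (hV v hv),
      Multiset.sum_map_add]
    congr 1
    · rw [Multiset.sum_map_sub, sum_map_ind, sum_map_ind]
    · rw [sum_map_finsum]
      refine Finset.sum_congr rfl fun z hz => ?_
      rw [Multiset.sum_map_sub, sum_map_ind, sum_map_ind]
  have hmemZ : ∀ z ∈ Z, z ≠ x ∧ z ≠ y := by
    intro z hz
    rw [hZ, Finset.mem_filter, Finset.mem_sdiff, Finset.mem_insert, Finset.mem_singleton] at hz
    push_neg at hz
    exact hz.1.2
  have key2 : (d3V π V : ℤ) - (d3V π' V : ℤ) = del V x y + ∑ z ∈ Z, -(Qq V y x z) := by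
    rw [key]
    congr 1
    refine Finset.sum_congr rfl fun z hz => ?_
    obtain ⟨hz1, hz2⟩ := hmemZ z hz
    have s1 : V.countP (fun v => v.idxOf x < v.idxOf y ∧ v.idxOf x < v.idxOf z) =
        V.countP (fun v => v.idxOf x < v.idxOf y ∧ v.idxOf y < v.idxOf z) +
        V.countP (fun v => v.idxOf x < v.idxOf z ∧ v.idxOf z < v.idxOf y) := by
      refine countP_split V _ _ _ (fun v hv => ?_) (fun v hv => by omega)
      have hd : v.idxOf y ≠ v.idxOf z := fun h => hz2 (idx_inj v (hV v hv) h).symm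
      omega
    have s2 : V.countP (fun v => v.idxOf y < v.idxOf x ∧ v.idxOf y < v.idxOf z) =
        V.countP (fun v => v.idxOf y < v.idxOf x ∧ v.idxOf x < v.idxOf z) +
        V.countP (fun v => v.idxOf y < v.idxOf z ∧ v.idxOf z < v.idxOf x) := by
      refine countP_split V _ _ _ (fun v hv => ?_) (fun v hv => by omega)
      have hd : v.idxOf x ≠ v.idxOf z := fun h => hz1 (idx_inj v (hV v hv) h).symm
      omega
    rw [s1, s2]
    simp only [Qq, nn3]
    push_cast
    ring
  have hQle : ∑ z ∈ Z, Qq V y x z ≤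
      ∑ z ∈ (Finset.univ : Finset α) \ {x, y}, max 0 (Qq V y x z) := by
    refine le_trans (Finset.sum_le_sum fun z _ => le_max_right 0 _) ?_
    exact Finset.sum_le_sum_of_subset_of_nonneg (Finset.filter_subset _ _)
      (fun z _ _ => le_max_left 0 _)
  have hmed := hπ.2 π' hπ'r
  have hmed' : (d3V π V : ℤ) ≤ (d3V π' V : ℤ) := Nat.cast_le.2 hmed
  rw [Finset.sum_neg_distrib] at key2
  linarith
end

section
/- Let π* be a 3-wise median of an election with voting profile V over a finite set C of alternatives, and let x, y be two alternatives occupying consecutive positions in π*. If δ_{xy} > 0 (i.e., x > y is the major order) and Q_{x,y,z} ≥ 0 for every alternative z ∈ C ∖ {x,y}, then x is ranked before y in π*. -/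
open Finset

variable {α : Type}

namespace Aux14

def P3 [DecidableEq α] (l v : List α) (S : Finset α) : Prop :=
  S.card ≤ 3 ∧ ∃ a ∈ S, ∃ b ∈ S, a ≠ b ∧
      (∀ c ∈ S, l.idxOf a ≤ l.idxOf c) ∧ (∀ c ∈ S, v.idxOf b ≤ v.idxOf c)

instance [DecidableEq α] (l v : List α) : DecidablePred (P3 l v) := fun S => by
  unfold P3; infer_instance

lemma d3_eq_sum [Fintype α] [DecidableEq α] (l v : List α) :
    (d3 l v : ℤ) = ∑ S ∈ (Finset.univ : Finset α).powerset, if P3 l v S then (1:ℤ) else 0 := by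
  have : d3 l v = ∑ S ∈ (Finset.univ : Finset α).powerset, if P3 l v S then 1 else 0 := by
    rw [d3, Finset.card_filter]
    exact Finset.sum_congr rfl fun S _ => if_congr Iff.rfl rfl rfl
  rw [this, Nat.cast_sum]
  exact Finset.sum_congr rfl fun S _ => by split <;> simp

lemma idxOf_map [DecidableEq α] {f : α → α} (hf : Function.Injective f) (l : List α) (a : α) :
    (l.map f).idxOf (f a) = l.idxOf a := by
  induction l with
  | nil => simp
  | cons b t ih =>
    simp only [List.map_cons, List.idxOf_cons, ih]
    by_cases h : a = b
    · subst h; simp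
    · have h1 : f b ≠ f a := fun hh => h (hf hh).symm
      rw [beq_false_of_ne h1, beq_false_of_ne (Ne.symm h)]

lemma swap_idx [DecidableEq α] (l : List α) (x y a : α) :
    (l.map (Equiv.swap x y)).idxOf a = l.idxOf (Equiv.swap x y a) := by
  conv_lhs => rw [show a = Equiv.swap x y (Equiv.swap x y a) by simp]
  exact idxOf_map (Equiv.swap x y).injective l _

lemma ranking_map_swap [DecidableEq α] {l : List α} (hl : IsRanking l) (x y : α) :
    IsRanking (l.map (Equiv.swap x y)) := by
  refine ⟨hl.1.map (Equiv.swap x y).injective, fun a => ?_⟩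
  rw [show a = Equiv.swap x y (Equiv.swap x y a) by simp]
  exact List.mem_map_of_mem (hl.2 _)

lemma ranking_idx_inj [DecidableEq α] {l : List α} (hl : IsRanking l) {a b : α}
    (h : l.idxOf a = l.idxOf b) : a = b :=
  (List.idxOf_inj (hl.2 a)).1 h

lemma ranking_idx_lt [DecidableEq α] {l : List α} (hl : IsRanking l) {a b : α} (hab : a ≠ b)
    (h2 : ¬ l.idxOf a < l.idxOf b) : l.idxOf b < l.idxOf a :=
  lt_of_le_of_ne (not_lt.1 h2) fun hh => hab (ranking_idx_inj hl hh).symm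

lemma pred_core_iff [DecidableEq α] {l v : List α} (hl : IsRanking l)
    {S : Finset α} {t : α} (ht : t ∈ S) (htop : ∀ c ∈ S, l.idxOf t ≤ l.idxOf c) :
    (∃ a ∈ S, ∃ b ∈ S, a ≠ b ∧ (∀ c ∈ S, l.idxOf a ≤ l.idxOf c) ∧
      (∀ c ∈ S, v.idxOf b ≤ v.idxOf c))
      ↔ ∃ b ∈ S, b ≠ t ∧ ∀ c ∈ S, v.idxOf b ≤ v.idxOf c := by
  constructor
  · rintro ⟨a, ha, b, hb, hab, hatop, hbtop⟩
    have hat : a = t := ranking_idx_inj hl (le_antisymm (hatop t ht) (htop a ha))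
    exact ⟨b, hb, fun h => hab (hat.trans h.symm), hbtop⟩
  · rintro ⟨b, hb, hbt, hbtop⟩
    exact ⟨t, ht, b, hb, fun hh => hbt hh.symm, htop, hbtop⟩

lemma swap_top [DecidableEq α] {l : List α} (hl : IsRanking l) {x y : α}
    (hk : l.idxOf x = l.idxOf y + 1)
    {S : Finset α} (hS : ¬(x ∈ S ∧ y ∈ S)) {a : α} (ha : a ∈ S)
    (htop : ∀ c ∈ S, l.idxOf a ≤ l.idxOf c) :
    ∀ c ∈ S, (l.map (Equiv.swap x y)).idxOf a ≤ (l.map (Equiv.swap x y)).idxOf c := by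
  intro c hc
  rw [swap_idx, swap_idx]
  by_cases hxS : x ∈ S
  · have hyS : y ∉ S := fun h => hS ⟨hxS, h⟩
    have hcy : c ≠ y := fun h => hyS (h ▸ hc)
    by_cases hax : a = x
    · rw [hax, Equiv.swap_apply_left]
      by_cases hcx : c = x
      · rw [hcx, Equiv.swap_apply_left]
      · rw [Equiv.swap_apply_of_ne_of_ne hcx hcy]
        have h1 := htop c hc
        rw [hax] at h1
        omega
    · have hay : a ≠ y := fun h => hyS (h ▸ ha)
      rw [Equiv.swap_apply_of_ne_of_ne hax hay]
      by_cases hcx : c = x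
      · rw [hcx, Equiv.swap_apply_left]
        have h1 := htop _ hxS
        have h2 : l.idxOf a ≠ l.idxOf x := fun h => hax (ranking_idx_inj hl h)
        omega
      · rw [Equiv.swap_apply_of_ne_of_ne hcx hcy]; exact htop c hc
  · by_cases hyS : y ∈ S
    · have hcx : c ≠ x := fun h => hxS (h ▸ hc)
      by_cases hay : a = y
      · rw [hay, Equiv.swap_apply_right]
        by_cases hcy : c = y
        · rw [hcy, Equiv.swap_apply_right]
        · rw [Equiv.swap_apply_of_ne_of_ne hcx hcy]
          have h1 := htop c hc
          rw [hay] at h1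
          have h2 : l.idxOf c ≠ l.idxOf y := fun h => hcy (ranking_idx_inj hl h)
          omega
      · have hax : a ≠ x := fun h => hxS (h ▸ ha)
        rw [Equiv.swap_apply_of_ne_of_ne hax hay]
        by_cases hcy : c = y
        · rw [hcy, Equiv.swap_apply_right]
          have h1 := htop _ hyS
          omega
        · rw [Equiv.swap_apply_of_ne_of_ne hcx hcy]; exact htop c hc
    · have hax : a ≠ x := fun h => hxS (h ▸ ha)
      have hay : a ≠ y := fun h => hyS (h ▸ ha)
      have hcx : c ≠ x := fun h => hxS (h ▸ hc)
      have hcy : c ≠ y := fun h => hyS (h ▸ hc)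
      rw [Equiv.swap_apply_of_ne_of_ne hax hay, Equiv.swap_apply_of_ne_of_ne hcx hcy]
      exact htop c hc

lemma P3_top_congr [DecidableEq α] {l l' v : List α} (hl : IsRanking l) (hl' : IsRanking l')
    {S : Finset α} {t : α} (ht : t ∈ S)
    (htop : ∀ c ∈ S, l.idxOf t ≤ l.idxOf c)
    (htop' : ∀ c ∈ S, l'.idxOf t ≤ l'.idxOf c) :
    P3 l v S ↔ P3 l' v S := by
  unfold P3
  rw [pred_core_iff hl ht htop, pred_core_iff hl' ht htop']

lemma P3_swap_off [DecidableEq α] {l v : List α} (hl : IsRanking l) {x y : α}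
    (hk : l.idxOf x = l.idxOf y + 1)
    {S : Finset α} (hS : ¬(x ∈ S ∧ y ∈ S)) :
    P3 l v S ↔ P3 (l.map (Equiv.swap x y)) v S := by
  have hm : IsRanking (l.map (Equiv.swap x y)) := ranking_map_swap hl x y
  constructor
  · rintro ⟨hc, a, ha, b, hb, hab, hatop, hbtop⟩
    exact ⟨hc, a, ha, b, hb, hab, swap_top hl hk hS ha hatop, hbtop⟩
  · rintro ⟨hc, a, ha, b, hb, hab, hatop, hbtop⟩
    refine ⟨hc, a, ha, b, hb, hab, ?_, hbtop⟩
    have hk' : (l.map (Equiv.swap x y)).idxOf y = (l.map (Equiv.swap x y)).idxOf x + 1 := by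
      rw [swap_idx, swap_idx, Equiv.swap_apply_left, Equiv.swap_apply_right, hk]
    have hS' : ¬(y ∈ S ∧ x ∈ S) := fun h => hS ⟨h.2, h.1⟩
    have := swap_top hm hk' hS' ha hatop
    rw [Equiv.swap_comm] at this
    rwa [show (l.map (Equiv.swap x y)).map (Equiv.swap x y) = l by
      rw [List.map_map]
      simp [Function.comp_def, Equiv.swap_apply_self]] at this

lemma P3_pair [DecidableEq α] {l v : List α} (hl : IsRanking l) (hv : IsRanking v)
    {x y : α} (hxy : x ≠ y) (hk : l.idxOf x = l.idxOf y + 1) :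
    P3 l v {x, y} ↔ v.idxOf x < v.idxOf y := by
  have hy : y ∈ ({x, y} : Finset α) := by simp
  have htop : ∀ c ∈ ({x, y} : Finset α), l.idxOf y ≤ l.idxOf c := by
    intro c hc
    simp only [mem_insert, mem_singleton] at hc
    rcases hc with rfl | rfl
    · omega
    · exact le_refl _
  unfold P3
  rw [pred_core_iff hl hy htop]
  constructor
  · rintro ⟨-, b, hb, hbt, hbtop⟩
    simp only [mem_insert, mem_singleton] at hb
    have hbx : b = x := by tauto
    subst hbx
    exact lt_of_le_of_ne (hbtop y hy) fun h => hxy (ranking_idx_inj hv h)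
  · intro h
    refine ⟨by rw [card_pair hxy]; omega, x, by simp, fun h' => hxy h', ?_⟩
    intro c hc
    simp only [mem_insert, mem_singleton] at hc
    rcases hc with rfl | rfl
    · exact le_refl _
    · exact h.le

lemma P3_triple_after [DecidableEq α] {l v : List α} (hl : IsRanking l) (hv : IsRanking v)
    {x y z : α} (hxy : x ≠ y) (hzx : z ≠ x) (hzy : z ≠ y)
    (hk : l.idxOf x = l.idxOf y + 1) (hz : l.idxOf x < l.idxOf z) :
    P3 l v (insert z {x, y}) ↔
      ¬ (v.idxOf y < v.idxOf x ∧ v.idxOf y < v.idxOf z) := by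
  have hy : y ∈ insert z ({x, y} : Finset α) := by simp
  have htop : ∀ c ∈ insert z ({x, y} : Finset α), l.idxOf y ≤ l.idxOf c := by
    intro c hc
    simp only [mem_insert, mem_singleton] at hc
    rcases hc with rfl | rfl | rfl
    · omega
    · omega
    · exact le_refl _
  have hcard : (insert z ({x, y} : Finset α)).card ≤ 3 := by
    rw [card_insert_of_notMem (by simp [hzx, hzy]), card_pair hxy]
  unfold P3
  rw [pred_core_iff hl hy htop]
  constructor
  · rintro ⟨-, b, hb, hbt, hbtop⟩ ⟨h1, h2⟩
    simp only [mem_insert, mem_singleton] at hb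
    have hby : v.idxOf b ≤ v.idxOf y := hbtop y hy
    rcases hb with rfl | rfl | rfl
    · omega
    · omega
    · exact hbt rfl
  · intro h
    refine ⟨hcard, ?_⟩
    obtain ⟨b, hbS, hbtop⟩ :=
      Finset.exists_min_image (insert z ({x, y} : Finset α)) (fun c => v.idxOf c) ⟨y, hy⟩
    refine ⟨b, hbS, ?_, hbtop⟩
    rintro rfl
    exact h ⟨lt_of_le_of_ne (hbtop x (by simp)) fun hh => hxy (ranking_idx_inj hv hh).symm,
      lt_of_le_of_ne (hbtop z (by simp)) fun hh => hzy (ranking_idx_inj hv hh).symm⟩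

lemma bset_eq [Fintype α] [DecidableEq α] {x y : α} (hxy : x ≠ y) :
    ((Finset.univ : Finset α).powerset.filter (fun S => (x ∈ S ∧ y ∈ S) ∧ S.card ≤ 3)) =
      insert ({x, y} : Finset α) ((Finset.univ \ {x, y}).image (fun z => insert z {x, y})) := by
  ext S
  simp only [mem_filter, mem_powerset, subset_univ, true_and, mem_insert, mem_image,
    mem_sdiff, mem_univ, mem_singleton]
  constructor
  · rintro ⟨⟨hx, hy⟩, hc3⟩
    have hsub : ({x, y} : Finset α) ⊆ S := by
      intro a ha; simp only [mem_insert, mem_singleton] at ha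
      rcases ha with rfl | rfl <;> assumption
    have h2 : 2 ≤ S.card := by
      calc 2 = ({x, y} : Finset α).card := (card_pair hxy).symm
        _ ≤ S.card := card_le_card hsub
    interval_cases h : S.card
    · left; exact (Finset.eq_of_subset_of_card_le hsub (by rw [h, card_pair hxy])).symm
    · right
      have hW : (S \ {x, y}).card = 1 := by
        rw [card_sdiff_of_subset hsub, h, card_pair hxy]
      obtain ⟨z, hz⟩ := Finset.card_eq_one.1 hW
      have hzS : z ∈ S \ {x, y} := by rw [hz]; exact mem_singleton_self z
      rw [mem_sdiff, mem_insert, mem_singleton] at hzS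
      refine ⟨z, by tauto, ?_⟩
      have hsub2 : insert z {x, y} ⊆ S := by
        intro a ha
        simp only [mem_insert, mem_singleton] at ha
        rcases ha with rfl | rfl | rfl
        · exact hzS.1
        · exact hx
        · exact hy
      refine Finset.eq_of_subset_of_card_le hsub2 ?_
      rw [h, card_insert_of_notMem (by simp [hzS.2]), card_pair hxy]
  · rintro (rfl | ⟨z, hz, rfl⟩)
    · exact ⟨⟨by simp, by simp⟩, by rw [card_pair hxy]; omega⟩
    · refine ⟨⟨by simp, by simp⟩, ?_⟩
      rw [card_insert_of_notMem (by simp [hz]), card_pair hxy]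

lemma d3_split [Fintype α] [DecidableEq α] (l v : List α) {x y : α} (hxy : x ≠ y) :
    (d3 l v : ℤ) =
      (∑ S ∈ (Finset.univ : Finset α).powerset.filter (fun S => ¬(x ∈ S ∧ y ∈ S)),
        if P3 l v S then (1:ℤ) else 0)
      + (if P3 l v {x, y} then (1:ℤ) else 0)
      + ∑ z ∈ (Finset.univ : Finset α) \ {x, y},
          (if P3 l v (insert z {x, y}) then (1:ℤ) else 0) := by
  rw [d3_eq_sum,
    ← Finset.sum_filter_add_sum_filter_not ((Finset.univ : Finset α).powerset)
      (fun S => x ∈ S ∧ y ∈ S) (fun S => if P3 l v S then (1:ℤ) else 0)]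
  have hboth : ∑ S ∈ (Finset.univ : Finset α).powerset.filter (fun S => x ∈ S ∧ y ∈ S),
      (if P3 l v S then (1:ℤ) else 0)
      = (if P3 l v {x, y} then (1:ℤ) else 0)
        + ∑ z ∈ (Finset.univ : Finset α) \ {x, y},
            (if P3 l v (insert z {x, y}) then (1:ℤ) else 0) := by
    rw [← Finset.sum_filter_add_sum_filter_not
      (((Finset.univ : Finset α).powerset.filter (fun S => x ∈ S ∧ y ∈ S)))
      (fun S => S.card ≤ 3) (fun S => if P3 l v S then (1:ℤ) else 0)]
    have hz2 : ∑ S ∈ (((Finset.univ : Finset α).powerset.filter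
        (fun S => x ∈ S ∧ y ∈ S)).filter (fun S => ¬ S.card ≤ 3)),
        (if P3 l v S then (1:ℤ) else 0) = 0 := by
      apply Finset.sum_eq_zero
      intro S hS
      simp only [mem_filter] at hS
      rw [if_neg]
      exact fun hP => hS.2 hP.1
    rw [hz2, add_zero, Finset.filter_filter, bset_eq hxy, Finset.sum_insert, Finset.sum_image]
    · intro z hz z' hz' h
      simp only [coe_sdiff, Set.mem_diff, mem_coe, mem_sdiff, mem_univ, mem_insert, mem_singleton, true_and, coe_insert, coe_singleton, Set.mem_insert_iff, Set.mem_singleton_iff, coe_univ, Set.mem_univ] at hz hz'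
      have : z ∈ insert z' ({x, y} : Finset α) := by beta_reduce at h; rw [← h]; simp
      simp only [mem_insert, mem_singleton] at this
      tauto
    · intro hmem
      simp only [mem_image, mem_sdiff, mem_univ, mem_insert, mem_singleton, true_and] at hmem
      obtain ⟨z, hz, hzz⟩ := hmem
      have : (insert z ({x, y} : Finset α)).card = 3 := by
        rw [card_insert_of_notMem (by simp [hz]), card_pair hxy]
      rw [hzz, card_pair hxy] at this
      omega
  rw [hboth]
  ring

lemma pervote [Fintype α] [DecidableEq α] (π v : List α) (hπr : IsRanking π)
    (hv : IsRanking v) (x y : α) (hxy : x ≠ y) (hk : π.idxOf x = π.idxOf y + 1) :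
    (d3 (π.map (Equiv.swap x y)) v : ℤ) - d3 π v =
      ((if v.idxOf y < v.idxOf x then (1:ℤ) else 0)
        - (if v.idxOf x < v.idxOf y then (1:ℤ) else 0))
      + ∑ z ∈ ((Finset.univ : Finset α) \ {x, y}).filter (fun z => π.idxOf x < π.idxOf z),
          ((if v.idxOf y < v.idxOf x ∧ v.idxOf y < v.idxOf z then (1:ℤ) else 0)
           - (if v.idxOf x < v.idxOf y ∧ v.idxOf x < v.idxOf z then (1:ℤ) else 0)) := by
  have hm : IsRanking (π.map (Equiv.swap x y)) := ranking_map_swap hπr x y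
  set m := π.map (Equiv.swap x y) with hmdef
  have hmx : m.idxOf x = π.idxOf y := by rw [hmdef, swap_idx, Equiv.swap_apply_left]
  have hmy : m.idxOf y = π.idxOf x := by rw [hmdef, swap_idx, Equiv.swap_apply_right]
  have hmz : ∀ z, z ≠ x → z ≠ y → m.idxOf z = π.idxOf z := fun z h1 h2 => by
    rw [hmdef, swap_idx, Equiv.swap_apply_of_ne_of_ne h1 h2]
  rw [d3_split m v hxy, d3_split π v hxy]
  have hoff : ∑ S ∈ (Finset.univ : Finset α).powerset.filter (fun S => ¬(x ∈ S ∧ y ∈ S)),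
      (if P3 m v S then (1:ℤ) else 0)
      = ∑ S ∈ (Finset.univ : Finset α).powerset.filter (fun S => ¬(x ∈ S ∧ y ∈ S)),
      (if P3 π v S then (1:ℤ) else 0) := by
    apply Finset.sum_congr rfl
    intro S hS
    simp only [mem_filter] at hS
    exact if_congr (P3_swap_off hπr hk hS.2).symm rfl rfl
  rw [hoff]
  have hpairπ : (if P3 π v ({x, y} : Finset α) then (1:ℤ) else 0)
      = (if v.idxOf x < v.idxOf y then (1:ℤ) else 0) :=
    if_congr (P3_pair hπr hv hxy hk) rfl rfl
  have hpairm : (if P3 m v ({x, y} : Finset α) then (1:ℤ) else 0)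
      = (if v.idxOf y < v.idxOf x then (1:ℤ) else 0) := by
    rw [show ({x, y} : Finset α) = {y, x} from pair_comm x y]
    exact if_congr (P3_pair hm hv hxy.symm (by rw [hmy, hmx, hk])) rfl rfl
  rw [hpairπ, hpairm]
  rw [← Finset.sum_filter_add_sum_filter_not ((Finset.univ : Finset α) \ {x, y})
      (fun z => π.idxOf x < π.idxOf z)
      (fun z => if P3 m v (insert z {x, y}) then (1:ℤ) else 0),
    ← Finset.sum_filter_add_sum_filter_not ((Finset.univ : Finset α) \ {x, y})
      (fun z => π.idxOf x < π.idxOf z)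
      (fun z => if P3 π v (insert z {x, y}) then (1:ℤ) else 0)]
  have hcancel : ∑ z ∈ ((Finset.univ : Finset α) \ {x, y}).filter
        (fun z => ¬ π.idxOf x < π.idxOf z),
      (if P3 m v (insert z {x, y}) then (1:ℤ) else 0)
      = ∑ z ∈ ((Finset.univ : Finset α) \ {x, y}).filter
        (fun z => ¬ π.idxOf x < π.idxOf z),
      (if P3 π v (insert z {x, y}) then (1:ℤ) else 0) := by
    apply Finset.sum_congr rfl
    intro z hz
    simp only [mem_filter, mem_sdiff, mem_univ, mem_insert, mem_singleton, true_and,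
      not_or] at hz
    obtain ⟨⟨hzx, hzy⟩, hzlt⟩ := hz
    have e1 : π.idxOf z ≠ π.idxOf x := fun h => hzx (ranking_idx_inj hπr h)
    have e2 : π.idxOf z ≠ π.idxOf y := fun h => hzy (ranking_idx_inj hπr h)
    have hzS : z ∈ insert z ({x, y} : Finset α) := by simp
    have htopπ : ∀ c ∈ insert z ({x, y} : Finset α), π.idxOf z ≤ π.idxOf c := by
      intro c hc
      simp only [mem_insert, mem_singleton] at hc
      rcases hc with rfl | rfl | rfl
      · exact le_refl _
      · omega
      · omega
    have htopm : ∀ c ∈ insert z ({x, y} : Finset α), m.idxOf z ≤ m.idxOf c := by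
      intro c hc
      simp only [mem_insert, mem_singleton] at hc
      have hz' := hmz z hzx hzy
      rcases hc with rfl | rfl | rfl
      · exact le_refl _
      · rw [hz', hmx]; omega
      · rw [hz', hmy]; omega
    exact if_congr (P3_top_congr hm hπr hzS htopm htopπ) rfl rfl
  rw [hcancel]
  have hAm : ∑ z ∈ ((Finset.univ : Finset α) \ {x, y}).filter
        (fun z => π.idxOf x < π.idxOf z),
      (if P3 m v (insert z {x, y}) then (1:ℤ) else 0)
      = ∑ z ∈ ((Finset.univ : Finset α) \ {x, y}).filter
        (fun z => π.idxOf x < π.idxOf z),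
      (1 - (if v.idxOf x < v.idxOf y ∧ v.idxOf x < v.idxOf z then (1:ℤ) else 0)) := by
    apply Finset.sum_congr rfl
    intro z hz
    simp only [mem_filter, mem_sdiff, mem_univ, mem_insert, mem_singleton, true_and,
      not_or] at hz
    obtain ⟨⟨hzx, hzy⟩, hzlt⟩ := hz
    have hz' := hmz z hzx hzy
    have hiff : P3 m v (insert z ({x, y} : Finset α)) ↔
        ¬ (v.idxOf x < v.idxOf y ∧ v.idxOf x < v.idxOf z) := by
      rw [show ({x, y} : Finset α) = {y, x} from pair_comm x y]
      exact P3_triple_after hm hv hxy.symm hzy hzx (by rw [hmy, hmx, hk])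
        (by rw [hmy, hz']; omega)
    rw [if_congr hiff rfl rfl]
    by_cases hA : v.idxOf x < v.idxOf y ∧ v.idxOf x < v.idxOf z <;> simp [hA]
  have hAπ : ∑ z ∈ ((Finset.univ : Finset α) \ {x, y}).filter
        (fun z => π.idxOf x < π.idxOf z),
      (if P3 π v (insert z {x, y}) then (1:ℤ) else 0)
      = ∑ z ∈ ((Finset.univ : Finset α) \ {x, y}).filter
        (fun z => π.idxOf x < π.idxOf z),
      (1 - (if v.idxOf y < v.idxOf x ∧ v.idxOf y < v.idxOf z then (1:ℤ) else 0)) := by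
    apply Finset.sum_congr rfl
    intro z hz
    simp only [mem_filter, mem_sdiff, mem_univ, mem_insert, mem_singleton, true_and,
      not_or] at hz
    obtain ⟨⟨hzx, hzy⟩, hzlt⟩ := hz
    have hiff : P3 π v (insert z ({x, y} : Finset α)) ↔
        ¬ (v.idxOf y < v.idxOf x ∧ v.idxOf y < v.idxOf z) :=
      P3_triple_after hπr hv hxy hzx hzy hk hzlt
    rw [if_congr hiff rfl rfl]
    by_cases hA : v.idxOf y < v.idxOf x ∧ v.idxOf y < v.idxOf z <;> simp [hA]
  rw [hAm, hAπ, Finset.sum_sub_distrib, Finset.sum_sub_distrib]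
  ring_nf
  rw [Finset.sum_sub_distrib]
  ring

lemma msum_cast (V : Multiset (List α)) (f : List α → ℕ) :
    ((V.map f).sum : ℤ) = (V.map fun v => (f v : ℤ)).sum := by
  induction V using Multiset.induction_on with
  | empty => simp
  | cons a s ih => simp [ih]

lemma msum_ite (V : Multiset (List α)) (p : List α → Prop) [DecidablePred p] :
    (V.map fun v => if p v then (1:ℤ) else 0).sum = V.countP p := by
  induction V using Multiset.induction_on with
  | empty => simp
  | cons a s ih => by_cases h : p a <;> simp [h, ih] <;> ring

lemma msum_finsum {β : Type} (V : Multiset (List α)) (Z : Finset β) (f : β → List α → ℤ) :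
    (V.map fun v => ∑ z ∈ Z, f z v).sum = ∑ z ∈ Z, (V.map (f z)).sum := by
  induction V using Multiset.induction_on with
  | empty => simp
  | cons a s ih => simp [ih, Finset.sum_add_distrib]

lemma countP_split (V : Multiset (List α)) (p q : List α → Prop)
    [DecidablePred p] [DecidablePred q] :
    V.countP p = V.countP (fun v => p v ∧ q v) + V.countP (fun v => p v ∧ ¬ q v) := by
  induction V using Multiset.induction_on with
  | empty => simp
  | cons a s ih =>
    by_cases h1 : p a <;> by_cases h2 : q a <;>
      simp [Multiset.countP_cons, h1, h2, ih] <;> omega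

lemma count_top3 [DecidableEq α] (V : Multiset (List α)) (hV : ∀ v ∈ V, IsRanking v)
    {a b c : α} (hbc : b ≠ c) :
    V.countP (fun v => v.idxOf a < v.idxOf b ∧ v.idxOf a < v.idxOf c)
      = nn3 V a b c + nn3 V a c b := by
  rw [countP_split V _ (fun v => v.idxOf b < v.idxOf c)]
  congr 1
  · apply Multiset.countP_congr rfl
    intro v hv
    apply propext
    constructor
    · rintro ⟨⟨h1, _⟩, h2⟩; exact ⟨h1, h2⟩
    · rintro ⟨h1, h2⟩; exact ⟨⟨h1, h1.trans h2⟩, h2⟩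
  · apply Multiset.countP_congr rfl
    intro v hv
    apply propext
    constructor
    · rintro ⟨⟨h1, h2⟩, h3⟩
      exact ⟨h2, ranking_idx_lt (hV v hv) hbc h3⟩
    · rintro ⟨h1, h2⟩
      exact ⟨⟨h1.trans h2, h1⟩, fun h => absurd (h2.trans h) (lt_irrefl _)⟩

end Aux14

open Aux14 in
theorem stmt14 [Fintype α] [DecidableEq α]
    (V : Multiset (List α)) (hV : ∀ v ∈ V, IsRanking v)
    (π : List α) (hπ : IsMedian3 V π)
    (x y : α) (hxy : x ≠ y)
    (hcons : π.idxOf y = π.idxOf x + 1 ∨ π.idxOf x = π.idxOf y + 1)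
    (hmaj : 0 < del V x y)
    (hQ : ∀ z : α, z ≠ x → z ≠ y → 0 ≤ Qq V x y z) :
    π.idxOf x < π.idxOf y := by
  rcases hcons with h | hk
  · omega
  exfalso
  have hπr := hπ.1
  have hm : IsRanking (π.map (Equiv.swap x y)) := ranking_map_swap hπr x y
  set m := π.map (Equiv.swap x y) with hmdef
  set Z := ((Finset.univ : Finset α) \ {x, y}).filter (fun z => π.idxOf x < π.idxOf z)
    with hZdef
  have key : (d3V m V : ℤ) - d3V π V
      = ((nn2 V y x : ℤ) - nn2 V x y) + ∑ z ∈ Z, (-(Qq V x y z)) := by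
    have h1 : (d3V m V : ℤ) - d3V π V
        = (V.map fun v => (d3 m v : ℤ) - d3 π v).sum := by
      rw [d3V, d3V, msum_cast, msum_cast, Multiset.sum_map_sub]
    rw [h1, Multiset.map_congr rfl (fun v hv => pervote π v hπr (hV v hv) x y hxy hk)]
    rw [Multiset.sum_map_add, Multiset.sum_map_sub, msum_ite, msum_ite, msum_finsum]
    congr 1
    apply Finset.sum_congr rfl
    intro z hz
    simp only [hZdef, mem_filter, mem_sdiff, mem_univ, mem_insert, mem_singleton, true_and,
      not_or] at hz
    obtain ⟨⟨hzx, hzy⟩, -⟩ := hz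
    rw [Multiset.sum_map_sub, msum_ite, msum_ite,
      count_top3 V hV (show x ≠ z from fun h => hzx h.symm),
      count_top3 V hV (show y ≠ z from fun h => hzy h.symm)]
    rw [Qq]
    push_cast
    ring
  have hQs : ∑ z ∈ Z, (-(Qq V x y z)) ≤ 0 := by
    apply Finset.sum_nonpos
    intro z hz
    simp only [hZdef, mem_filter, mem_sdiff, mem_univ, mem_insert, mem_singleton, true_and,
      not_or] at hz
    exact neg_nonpos_of_nonneg (hQ z hz.1.1 hz.1.2)
  have hdel : (nn2 V y x : ℤ) - nn2 V x y = - del V x y := by rw [del]; ring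
  have hlt : (d3V m V : ℤ) < d3V π V := by
    rw [hdel] at key
    linarith
  have hle : (d3V π V : ℤ) ≤ d3V m V := by exact_mod_cast hπ.2 m hm
  linarith
end

section
/- Let V be an election over a finite set C of alternatives, let x, y ∈ C be distinct, and let L, Z, R be pairwise disjoint linearly ordered subsets of C with C = L ∪ {y} ∪ Z ∪ {x} ∪ R. Consider the rankings π: L > y > Z > x > R, σ₁*: L > Z > x > y > R, and σ₂*: L > x > y > Z > R, and set Δᵢ = d²(π, V) − d²(σᵢ*, V) for i ∈ {1,2}. Then Δ₁ + Δ₂ = 2δ_{xy} − Σ_{z ∈ Z} (δ_{yz} + δ_{zx}). -/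
open Finset

variable {α : Type}

section Aux
variable [Fintype α] [DecidableEq α]

lemma d2_eq_pairs (l m : List α) :
    d2 l m = ((Finset.univ : Finset (α × α)).filter
      (fun p => l.idxOf p.1 < l.idxOf p.2 ∧ m.idxOf p.2 < m.idxOf p.1)).card := by
  rw [d2]
  symm
  apply Finset.card_bij (fun p _ => ({p.1, p.2} : Finset α))
  · rintro ⟨a, b⟩ hp
    simp only [Finset.mem_filter, Finset.mem_univ, true_and] at hp
    obtain ⟨h1, h2⟩ := hp
    have hab : a ≠ b := by rintro rfl; exact lt_irrefl _ h1
    refine Finset.mem_filter.mpr ⟨Finset.mem_powerset.mpr (Finset.subset_univ _), ?_, ?_⟩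
    · exact Finset.card_pair hab
    · exact ⟨a, by simp, b, by simp, h1, h2⟩
  · rintro ⟨a, b⟩ hp ⟨c, d⟩ hq heq
    simp only [Finset.mem_filter, Finset.mem_univ, true_and] at hp hq
    have hc : c ∈ ({a, b} : Finset α) := by rw [heq]; simp
    have hd : d ∈ ({a, b} : Finset α) := by rw [heq]; simp
    simp only [Finset.mem_insert, Finset.mem_singleton] at hc hd
    obtain ⟨h1, -⟩ := hp
    obtain ⟨h2, -⟩ := hq
    rcases hc with rfl | rfl <;> rcases hd with rfl | rfl
    · exact absurd h2 (lt_irrefl _)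
    · rfl
    · omega
    · exact absurd h2 (lt_irrefl _)
  · intro S hS
    simp only [Finset.mem_filter] at hS
    obtain ⟨-, hcard, a, ha, b, hb, h1, h2⟩ := hS
    have hab : a ≠ b := by rintro rfl; exact lt_irrefl _ h1
    have hSab : S = {a, b} := by
      refine (Finset.eq_of_subset_of_card_le ?_ ?_).symm
      · intro e he
        simp only [Finset.mem_insert, Finset.mem_singleton] at he
        rcases he with rfl | rfl <;> assumption
      · rw [hcard, Finset.card_pair hab]
    exact ⟨(a, b), by simp only [Finset.mem_filter, Finset.mem_univ, true_and]; exact ⟨h1, h2⟩,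
      hSab.symm⟩

lemma d2_int (l v : List α) :
    (d2 l v : ℤ) = ∑ p : α × α,
      (if l.idxOf p.1 < l.idxOf p.2 ∧ v.idxOf p.2 < v.idxOf p.1 then 1 else 0) := by
  rw [d2_eq_pairs, Finset.card_filter]
  push_cast
  rfl

lemma d2_move (A B C : List α) (u : α)
    (hr : IsRanking (A ++ u :: (B ++ C))) (v : List α) :
    (d2 (A ++ u :: (B ++ C)) v : ℤ) - d2 (A ++ (B ++ u :: C)) v
      = ∑ b ∈ B.toFinset, ((if v.idxOf b < v.idxOf u then (1:ℤ) else 0)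
          - (if v.idxOf u < v.idxOf b then 1 else 0)) := by
  set l₁ := A ++ u :: (B ++ C) with hl₁
  set l₂ := A ++ (B ++ u :: C) with hl₂
  obtain ⟨hAnd, hcons, hAdis⟩ := List.nodup_append.mp hr.1
  obtain ⟨huBC, hBCnd⟩ := List.nodup_cons.mp hcons
  obtain ⟨hBnd, hCnd, hBCdis⟩ := List.nodup_append.mp hBCnd
  have huA : u ∉ A := fun h => hAdis u h u List.mem_cons_self rfl
  have huB : u ∉ B := fun h => huBC (List.mem_append_left _ h)
  have huC : u ∉ C := fun h => huBC (List.mem_append_right _ h)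
  have hBA : ∀ e ∈ B, e ∉ A :=
    fun e he h => hAdis e h e (List.mem_cons_of_mem _ (List.mem_append_left _ he)) rfl
  have hCA : ∀ e ∈ C, e ∉ A :=
    fun e he h => hAdis e h e (List.mem_cons_of_mem _ (List.mem_append_right _ he)) rfl
  have hCB : ∀ e ∈ C, e ∉ B := fun e he h => hBCdis e h e he rfl
  have hmem : ∀ e : α, e ∈ A ∨ e = u ∨ e ∈ B ∨ e ∈ C := by
    intro e
    have := hr.2 e
    simpa [hl₁, List.mem_append, List.mem_cons, or_assoc] using this
  have key : ∀ e : α,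
      (e ∈ A ∧ l₁.idxOf e = A.idxOf e ∧ l₂.idxOf e = A.idxOf e ∧
        A.idxOf e < A.length) ∨
      (e = u ∧ l₁.idxOf e = A.length ∧ l₂.idxOf e = A.length + B.length) ∨
      (e ∈ B ∧ l₁.idxOf e = A.length + 1 + B.idxOf e ∧
        l₂.idxOf e = A.length + B.idxOf e ∧ B.idxOf e < B.length) ∨
      (e ∈ C ∧ l₁.idxOf e = A.length + 1 + B.length + C.idxOf e ∧
        l₂.idxOf e = A.length + B.length + 1 + C.idxOf e) := by
    intro e
    rcases hmem e with hA | rfl | hB | hC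
    · exact Or.inl ⟨hA, by rw [hl₁, List.idxOf_append_of_mem hA],
        by rw [hl₂, List.idxOf_append_of_mem hA], List.idxOf_lt_length_iff.mpr hA⟩
    · refine Or.inr (Or.inl ⟨rfl, ?_, ?_⟩)
      · rw [hl₁, List.idxOf_append_of_notMem huA, List.idxOf_cons_self]
        omega
      · rw [hl₂, List.idxOf_append_of_notMem huA, List.idxOf_append_of_notMem huB,
          List.idxOf_cons_self]
        omega
    · have heA := hBA e hB
      have hne : u ≠ e := fun h => huB (h ▸ hB)
      refine Or.inr (Or.inr (Or.inl ⟨hB, ?_, ?_, List.idxOf_lt_length_iff.mpr hB⟩))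
      · rw [hl₁, List.idxOf_append_of_notMem heA, List.idxOf_cons_ne _ hne,
          List.idxOf_append_of_mem hB]
        omega
      · rw [hl₂, List.idxOf_append_of_notMem heA, List.idxOf_append_of_mem hB]
    · have heA := hCA e hC
      have heB := hCB e hC
      have hne : u ≠ e := fun h => huC (h ▸ hC)
      refine Or.inr (Or.inr (Or.inr ⟨hC, ?_, ?_⟩))
      · rw [hl₁, List.idxOf_append_of_notMem heA, List.idxOf_cons_ne _ hne,
          List.idxOf_append_of_notMem heB]
        omega
      · rw [hl₂, List.idxOf_append_of_notMem heA, List.idxOf_append_of_notMem heB,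
          List.idxOf_cons_ne _ hne]
        omega
  rw [d2_int, d2_int, ← Finset.sum_sub_distrib]
  have hzero : ∀ p ∈ (Finset.univ : Finset (α × α)),
      p ∉ ((B.toFinset.image fun b => (u, b)) ∪ (B.toFinset.image fun b => (b, u))) →
      ((if l₁.idxOf p.1 < l₁.idxOf p.2 ∧ v.idxOf p.2 < v.idxOf p.1 then (1:ℤ) else 0)
        - (if l₂.idxOf p.1 < l₂.idxOf p.2 ∧ v.idxOf p.2 < v.idxOf p.1 then 1 else 0))
        = 0 := by
    rintro ⟨a, b⟩ - hp
    simp only [Finset.mem_union, Finset.mem_image, List.mem_toFinset, not_or, not_exists,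
      not_and] at hp
    obtain ⟨hp1, hp2⟩ := hp
    have h1 : ¬(a = u ∧ b ∈ B) := by
      rintro ⟨rfl, hb⟩; exact hp1 b hb rfl
    have h2 : ¬(b = u ∧ a ∈ B) := by
      rintro ⟨rfl, ha⟩; exact hp2 a ha rfl
    have hiff : (l₁.idxOf a < l₁.idxOf b) ↔ (l₂.idxOf a < l₂.idxOf b) := by
      rcases key a with ⟨ha, e1, e2, e3⟩ | ⟨ha, e1, e2⟩ | ⟨ha, e1, e2, e3⟩ | ⟨ha, e1, e2⟩ <;>
        rcases key b with ⟨hb, f1, f2, f3⟩ | ⟨hb, f1, f2⟩ | ⟨hb, f1, f2, f3⟩ |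
          ⟨hb, f1, f2⟩ <;>
        all_goals try omega
      all_goals tauto
    simp only [hiff, sub_self]
  rw [← Finset.sum_subset (Finset.subset_univ _) hzero]
  have hu1 : l₁.idxOf u = A.length ∧ l₂.idxOf u = A.length + B.length := by
    rcases key u with ⟨h, -⟩ | ⟨-, h1, h2⟩ | ⟨h, -⟩ | ⟨h, -⟩
    · exact absurd h huA
    · exact ⟨h1, h2⟩
    · exact absurd h huB
    · exact absurd h huC
  have hbfact : ∀ b ∈ B, l₁.idxOf b = A.length + 1 + B.idxOf b ∧
      l₂.idxOf b = A.length + B.idxOf b ∧ B.idxOf b < B.length := by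
    intro b hb
    rcases key b with ⟨h, -⟩ | ⟨rfl, -⟩ | ⟨-, h1, h2, h3⟩ | ⟨h, -⟩
    · exact absurd hb (fun _ => hBA b hb h)
    · exact absurd hb huB
    · exact ⟨h1, h2, h3⟩
    · exact absurd hb (hCB b h)
  have hdisj : Disjoint (B.toFinset.image fun b => (u, b))
      (B.toFinset.image fun b => (b, u)) := by
    rw [Finset.disjoint_left]
    rintro p hp1 hp2
    obtain ⟨b, hb, rfl⟩ := Finset.mem_image.mp hp1
    obtain ⟨b', hb', heq⟩ := Finset.mem_image.mp hp2
    rw [Prod.mk.injEq] at heq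
    exact huB (heq.1 ▸ List.mem_toFinset.mp hb')
  rw [Finset.sum_union hdisj, Finset.sum_image (by simp), Finset.sum_image (by simp),
    ← Finset.sum_add_distrib]
  apply Finset.sum_congr rfl
  intro b hb
  obtain ⟨hb1, hb2, hb3⟩ := hbfact b (List.mem_toFinset.mp hb)
  have c1 : l₁.idxOf u < l₁.idxOf b := by omega
  have c2 : ¬(l₂.idxOf u < l₂.idxOf b) := by omega
  have c3 : ¬(l₁.idxOf b < l₁.idxOf u) := by omega
  have c4 : l₂.idxOf b < l₂.idxOf u := by omega
  simp [c1, c2, c3, c4]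
  ring


lemma d2V_move (V : Multiset (List α)) (A B C : List α) (u : α)
    (hr : IsRanking (A ++ u :: (B ++ C))) :
    (d2V (A ++ u :: (B ++ C)) V : ℤ) - d2V (A ++ (B ++ u :: C)) V
      = ∑ b ∈ B.toFinset, ((nn2 V b u : ℤ) - nn2 V u b) := by
  induction V using Multiset.induction with
  | empty => simp [d2V, nn2]
  | cons v s ih =>
    have hv := d2_move A B C u hr v
    have hsum : ∑ b ∈ B.toFinset, ((nn2 (v ::ₘ s) b u : ℤ) - nn2 (v ::ₘ s) u b)
        = ∑ b ∈ B.toFinset, ((((nn2 s b u : ℤ) - nn2 s u b)) +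
          ((if v.idxOf b < v.idxOf u then (1:ℤ) else 0)
            - (if v.idxOf u < v.idxOf b then 1 else 0))) := by
      apply Finset.sum_congr rfl
      intro b _
      rw [show nn2 (v ::ₘ s) b u
            = nn2 s b u + (if v.idxOf b < v.idxOf u then 1 else 0) from by
          simp [nn2, Multiset.countP_cons],
        show nn2 (v ::ₘ s) u b
            = nn2 s u b + (if v.idxOf u < v.idxOf b then 1 else 0) from by
          simp [nn2, Multiset.countP_cons]]
      push_cast
      split_ifs <;> ring
    rw [hsum, Finset.sum_add_distrib]
    simp only [d2V, Multiset.map_cons, Multiset.sum_cons, Nat.cast_add] at ih ⊢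
    rw [← ih, ← hv]
    ring

end Aux

theorem stmt16 [Fintype α] [DecidableEq α]
    (V : Multiset (List α)) (hV : ∀ v ∈ V, IsRanking v)
    (x y : α) (hxy : x ≠ y)
    (L Z R : List α)
    (hπ : IsRanking (L ++ y :: (Z ++ x :: R))) :
    ((d2V (L ++ y :: (Z ++ x :: R)) V : ℤ) - d2V (L ++ (Z ++ x :: y :: R)) V)
      + ((d2V (L ++ y :: (Z ++ x :: R)) V : ℤ) - d2V (L ++ x :: y :: (Z ++ R)) V)
    = 2 * del V x y - ∑ z ∈ Z.toFinset, (del V y z + del V z x) := by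
  have e1 : L ++ y :: ((Z ++ [x]) ++ R) = L ++ y :: (Z ++ x :: R) := by simp
  have e2 : L ++ ((Z ++ [x]) ++ y :: R) = L ++ (Z ++ x :: y :: R) := by simp
  have hr1 : IsRanking (L ++ y :: ((Z ++ [x]) ++ R)) := by rw [e1]; exact hπ
  have h1 := d2V_move V L (Z ++ [x]) R y hr1
  rw [e1, e2] at h1
  have hperm : (L ++ y :: (Z ++ x :: R)).Perm (L ++ x :: ((y :: Z) ++ R)) := by
    have hstep : (y :: (Z ++ x :: R)).Perm (y :: x :: (Z ++ R)) :=
      List.perm_middle.cons y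
    exact List.Perm.append_left L (hstep.trans (List.Perm.swap x y (Z ++ R)))
  have hr2 : IsRanking (L ++ x :: ((y :: Z) ++ R)) :=
    ⟨hperm.nodup_iff.mp hπ.1, fun a => hperm.mem_iff.mp (hπ.2 a)⟩
  have h2 := d2V_move V L (y :: Z) R x hr2
  simp only [List.cons_append] at h2
  obtain ⟨-, hc, -⟩ := List.nodup_append.mp hπ.1
  obtain ⟨hy, hZxR⟩ := List.nodup_cons.mp hc
  obtain ⟨-, -, hdZ⟩ := List.nodup_append.mp hZxR
  have hyZ : y ∉ Z := fun h => hy (List.mem_append_left _ h)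
  have hxZ : x ∉ Z := fun h => hdZ x h x List.mem_cons_self rfl
  have hs1 : ∑ b ∈ (Z ++ [x]).toFinset, ((nn2 V b y : ℤ) - nn2 V y b)
      = (∑ b ∈ Z.toFinset, ((nn2 V b y : ℤ) - nn2 V y b)) + ((nn2 V x y : ℤ) - nn2 V y x) := by
    rw [List.toFinset_append, show ([x] : List α).toFinset = {x} from by simp,
      Finset.sum_union (by simp [hxZ])]
    simp
  have hs2 : ∑ b ∈ (y :: Z).toFinset, ((nn2 V b x : ℤ) - nn2 V x b)
      = ((nn2 V y x : ℤ) - nn2 V x y) + ∑ b ∈ Z.toFinset, ((nn2 V b x : ℤ) - nn2 V x b) := by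
    rw [List.toFinset_cons, Finset.sum_insert (by simp [hyZ])]
  rw [hs1] at h1
  rw [hs2] at h2
  simp only [del]
  rw [Finset.sum_add_distrib, Finset.sum_sub_distrib, Finset.sum_sub_distrib]
  rw [Finset.sum_sub_distrib] at h1 h2
  linarith [h1, h2]
end

section
/- (Key step of the Improved Iterated Major Order Theorem for Kemeny's rule) Let V be an election over a finite set C of alternatives and let U be a set of ordered pairs of distinct alternatives such that for every (a,b) ∈ U, a is ranked before b in every 2-wise median of V. Let x, y be distinct alternatives and set L_y = {z ∈ C : (z,y) ∈ U}, R_x = {z ∈ C : (x,z) ∈ U}, and Z = C ∖ (L_y ∪ R_x ∪ {x,y}). If 2δ_{xy} > Σ_{z ∈ Z} max(0, δ_{yz} + δ_{zx}), then x is ranked before y in every 2-wise median of V. -/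
open Finset

variable {α : Type}

lemma aux_indexOf_inj [DecidableEq α] {l : List α} (hl : IsRanking l) {a b : α}
    (h : l.idxOf a = l.idxOf b) : a = b := by
  have ha' := List.idxOf_lt_length_iff.2 (hl.2 a)
  have hb' := List.idxOf_lt_length_iff.2 (hl.2 b)
  have h1 : l.get ⟨l.idxOf a, ha'⟩ = a := List.idxOf_get ha'
  have h2 : l.get ⟨l.idxOf b, hb'⟩ = b := List.idxOf_get hb'
  rw [← h1, ← h2]
  congr 1
  exact Fin.ext h

lemma aux_exists_ranking [Fintype α] [DecidableEq α] (key : α → ℕ)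
    (hk : Function.Injective key) :
    ∃ l : List α, IsRanking l ∧ ∀ a b : α, (l.idxOf a < l.idxOf b ↔ key a < key b) := by
  classical
  let r : α → α → Prop := fun a b => key a ≤ key b
  haveI : IsTrans α r := ⟨fun a b c h1 h2 => le_trans h1 h2⟩
  haveI : Std.Antisymm r := ⟨fun a b h1 h2 => hk (le_antisymm h1 h2)⟩
  haveI : Std.Total r := ⟨fun a b => le_total _ _⟩
  haveI : DecidableRel r := fun a b => inferInstanceAs (Decidable (key a ≤ key b))
  have hmem : ∀ a : α, a ∈ Finset.univ.sort r := fun a => (Finset.mem_sort r).2 (mem_univ a)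
  have hrank : IsRanking (Finset.univ.sort r) := ⟨Finset.sort_nodup _ r, hmem⟩
  refine ⟨Finset.univ.sort r, hrank, ?_⟩
  set l := Finset.univ.sort r with hl
  have hsort : List.Pairwise r l := Finset.pairwise_sort _ r
  have key1 : ∀ a b : α, l.idxOf a < l.idxOf b → key a ≤ key b := by
    intro a b hab
    have hb' := List.idxOf_lt_length_iff.2 (hmem b)
    have ha' : l.idxOf a < l.length := lt_trans hab hb'
    have h := hsort.rel_get_of_lt (a := ⟨l.idxOf a, ha'⟩) (b := ⟨l.idxOf b, hb'⟩) hab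
    rwa [List.idxOf_get, List.idxOf_get] at h
  intro a b
  constructor
  · intro h
    rcases lt_or_eq_of_le (key1 a b h) with h' | h'
    · exact h'
    · exact absurd (hk h') (by rintro rfl; exact lt_irrefl _ h)
  · intro h
    rcases lt_trichotomy (l.idxOf a) (l.idxOf b) with h' | h' | h'
    · exact h'
    · rw [aux_indexOf_inj hrank h'] at h; exact absurd h (lt_irrefl _)
    · exact absurd h (not_lt.2 (key1 b a h'))

lemma aux_countP_sum {β : Type} (V : Multiset β) (p : β → Prop) [DecidablePred p] :
    (V.map (fun v => if p v then (1 : ℕ) else 0)).sum = V.countP p := by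
  induction V using Multiset.induction_on with
  | empty => simp
  | cons a t ih => by_cases h : p a <;> simp [h, ih, Multiset.countP_cons, Nat.add_comm]

lemma aux_sum_swap {β γ : Type} [DecidableEq γ] (V : Multiset β) (s : Finset γ)
    (f : β → γ → ℕ) :
    (V.map (fun v => ∑ S ∈ s, f v S)).sum = ∑ S ∈ s, (V.map (fun v => f v S)).sum := by
  induction V using Multiset.induction_on with
  | empty => simp
  | cons a t ih => simp [ih, Finset.sum_add_distrib]

lemma aux_d2V_rep [Fintype α] [DecidableEq α] (V : Multiset (List α)) (l : List α) :
    d2V l V = ∑ S ∈ (Finset.univ : Finset α).powerset.filter (fun S => S.card = 2),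
      V.countP (fun v => ∃ a ∈ S, ∃ b ∈ S,
        l.idxOf a < l.idxOf b ∧ v.idxOf b < v.idxOf a) := by
  classical
  unfold d2V
  have h1 : ∀ v : List α, d2 l v
      = ∑ S ∈ (Finset.univ : Finset α).powerset.filter (fun S => S.card = 2),
          (if ∃ a ∈ S, ∃ b ∈ S, l.idxOf a < l.idxOf b ∧ v.idxOf b < v.idxOf a
            then 1 else 0) := by
    intro v
    unfold d2
    rw [← Finset.filter_filter, Finset.card_eq_sum_ones, Finset.sum_filter]
  rw [Multiset.map_congr rfl (fun v _ => h1 v), aux_sum_swap]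
  exact Finset.sum_congr rfl (fun S _ => aux_countP_sum V _)

lemma aux_cnt_pair [DecidableEq α] (V : Multiset (List α)) (l : List α) {a b : α}
    (hab : l.idxOf a < l.idxOf b) :
    V.countP (fun v => ∃ c ∈ ({a, b} : Finset α), ∃ d ∈ ({a, b} : Finset α),
      l.idxOf c < l.idxOf d ∧ v.idxOf d < v.idxOf c) = nn2 V b a := by
  unfold nn2
  apply Multiset.countP_congr rfl
  intro v _
  rw [eq_iff_iff]
  constructor
  · rintro ⟨c, hc, d, hd, h1, h2⟩
    rcases Finset.mem_insert.1 hc with rfl | hc' <;> rcases Finset.mem_insert.1 hd with rfl | hd'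
    · exact absurd h1 (lt_irrefl _)
    · rw [Finset.mem_singleton] at hd'; subst hd'; exact h2
    · rw [Finset.mem_singleton] at hc'; subst hc'
      exact absurd (lt_trans h1 hab) (lt_irrefl _)
    · rw [Finset.mem_singleton] at hc' hd'; subst hc'; subst hd'
      exact absurd h1 (lt_irrefl _)
  · intro h
    exact ⟨a, Finset.mem_insert_self _ _, b, by simp, hab, h⟩

lemma aux_d2V_flip [Fintype α] [DecidableEq α] (V : Multiset (List α)) (l l' : List α)
    (W : Finset α) (w : α) (hw : w ∉ W)
    (hpres : ∀ a b : α, (a ≠ w ∨ b ∉ W) → (b ≠ w ∨ a ∉ W) →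
      (l.idxOf a < l.idxOf b ↔ l'.idxOf a < l'.idxOf b))
    (hflip : ∀ z ∈ W, l.idxOf w < l.idxOf z ∧ l'.idxOf z < l'.idxOf w) :
    (d2V l' V : ℤ) - (d2V l V : ℤ) = ∑ z ∈ W, del V w z := by
  classical
  rw [aux_d2V_rep V l, aux_d2V_rep V l']
  push_cast
  rw [← Finset.sum_sub_distrib]
  set T : Finset (Finset α) := W.image (fun z => ({w, z} : Finset α)) with hT
  have hwz_ne : ∀ z ∈ W, z ≠ w := fun z hz h => hw (h ▸ hz)
  have hTsub : T ⊆ (Finset.univ : Finset α).powerset.filter (fun S => S.card = 2) := by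
    intro S hS
    rcases Finset.mem_image.1 hS with ⟨z, hz, rfl⟩
    refine Finset.mem_filter.2 ⟨Finset.mem_powerset.2 (Finset.subset_univ _), ?_⟩
    exact Finset.card_pair (Ne.symm (hwz_ne z hz))
  have hkey : ∀ S ∈ (Finset.univ : Finset α).powerset.filter (fun S => S.card = 2),
      S ∉ T → ∀ c ∈ S, ∀ d ∈ S,
      (l.idxOf c < l.idxOf d ↔ l'.idxOf c < l'.idxOf d) := by
    intro S hS hST c hc d hd
    have hcard : S.card = 2 := (Finset.mem_filter.1 hS).2
    have hnot : ∀ u₁ u₂ : α, u₁ ∈ S → u₂ ∈ S → u₁ = w → u₂ ∈ W → False := by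
      intro u₁ u₂ hu₁ hu₂ h₁ h₂
      subst h₁
      have hne : u₁ ≠ u₂ := fun h => hw (h ▸ h₂)
      have hsub : ({u₁, u₂} : Finset α) ⊆ S := by
        intro t ht
        rcases Finset.mem_insert.1 ht with rfl | ht
        · exact hu₁
        · exact (Finset.mem_singleton.1 ht) ▸ hu₂
      have hSeq : ({u₁, u₂} : Finset α) = S :=
        Finset.eq_of_subset_of_card_le hsub (by rw [hcard, Finset.card_pair hne])
      exact hST (Finset.mem_image.2 ⟨u₂, h₂, hSeq⟩)
    refine hpres c d ?_ ?_
    · by_cases h1 : c = w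
      · exact Or.inr (fun h2 => hnot c d hc hd h1 h2)
      · exact Or.inl h1
    · by_cases h1 : d = w
      · exact Or.inr (fun h2 => hnot d c hd hc h1 h2)
      · exact Or.inl h1
  have hzero : ∀ S ∈ (Finset.univ : Finset α).powerset.filter (fun S => S.card = 2),
      S ∉ T →
      ((V.countP (fun v => ∃ a ∈ S, ∃ b ∈ S,
          l'.idxOf a < l'.idxOf b ∧ v.idxOf b < v.idxOf a) : ℤ)
        - (V.countP (fun v => ∃ a ∈ S, ∃ b ∈ S,
          l.idxOf a < l.idxOf b ∧ v.idxOf b < v.idxOf a) : ℤ)) = 0 := by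
    intro S hS hST
    have : V.countP (fun v => ∃ a ∈ S, ∃ b ∈ S,
          l'.idxOf a < l'.idxOf b ∧ v.idxOf b < v.idxOf a)
        = V.countP (fun v => ∃ a ∈ S, ∃ b ∈ S,
          l.idxOf a < l.idxOf b ∧ v.idxOf b < v.idxOf a) := by
      apply Multiset.countP_congr rfl
      intro v _
      rw [eq_iff_iff]
      constructor
      · rintro ⟨a, ha, b, hb, h1, h2⟩
        exact ⟨a, ha, b, hb, (hkey S hS hST a ha b hb).2 h1, h2⟩
      · rintro ⟨a, ha, b, hb, h1, h2⟩
        exact ⟨a, ha, b, hb, (hkey S hS hST a ha b hb).1 h1, h2⟩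
    rw [this, sub_self]
  rw [← Finset.sum_subset hTsub hzero]
  have hinj : ∀ z₁ ∈ W, ∀ z₂ ∈ W, ({w, z₁} : Finset α) = {w, z₂} → z₁ = z₂ := by
    intro z₁ h₁ z₂ h₂ h
    have : z₁ ∈ ({w, z₂} : Finset α) := h ▸ (by simp)
    rcases Finset.mem_insert.1 this with h' | h'
    · exact absurd h' (hwz_ne z₁ h₁)
    · exact Finset.mem_singleton.1 h'
  rw [hT, Finset.sum_image hinj]
  apply Finset.sum_congr rfl
  intro z hz
  have h1 : V.countP (fun v => ∃ a ∈ ({w, z} : Finset α), ∃ b ∈ ({w, z} : Finset α),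
      l.idxOf a < l.idxOf b ∧ v.idxOf b < v.idxOf a) = nn2 V z w :=
    aux_cnt_pair V l (hflip z hz).1
  have h2 : V.countP (fun v => ∃ a ∈ ({w, z} : Finset α), ∃ b ∈ ({w, z} : Finset α),
      l'.idxOf a < l'.idxOf b ∧ v.idxOf b < v.idxOf a) = nn2 V w z := by
    rw [Finset.pair_comm w z]
    exact aux_cnt_pair V l' (hflip z hz).2
  rw [h1, h2, del]

theorem stmt17 [Fintype α] [DecidableEq α]
    (V : Multiset (List α)) (hV : ∀ v ∈ V, IsRanking v)
    (U : Finset (α × α))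
    (hU : ∀ p ∈ U, p.1 ≠ p.2 ∧
      ∀ π : List α, IsMedian2 V π → π.idxOf p.1 < π.idxOf p.2)
    (x y : α) (hxy : x ≠ y)
    (hsum : 2 * del V x y >
      ∑ z ∈ (Finset.univ : Finset α) \
        ((Finset.univ.filter fun w => (w, y) ∈ U) ∪
          (Finset.univ.filter fun w => (x, w) ∈ U) ∪ {x, y}),
        max 0 (del V y z + del V z x)) :
    ∀ π : List α, IsMedian2 V π → π.idxOf x < π.idxOf y := by
  classical
  intro π hπ
  by_contra hcon
  push_neg at hcon
  have hπr : IsRanking π := hπ.1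
  have hyx : π.idxOf y < π.idxOf x := by
    rcases lt_or_eq_of_le hcon with h | h
    · exact h
    · exact absurd (aux_indexOf_inj hπr h) (Ne.symm hxy)
  have hne_idx : ∀ a b : α, a ≠ b → π.idxOf a ≠ π.idxOf b :=
    fun a b hab h => hab (aux_indexOf_inj hπr h)
  set B : Finset α := Finset.univ.filter
    (fun z => π.idxOf y < π.idxOf z ∧ π.idxOf z < π.idxOf x) with hB
  have hmemB : ∀ z : α, z ∈ B ↔ (π.idxOf y < π.idxOf z ∧ π.idxOf z < π.idxOf x) := by
    intro z; simp [hB]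
  have hxB : x ∉ B := by rw [hmemB]; omega
  have hyB : y ∉ B := by rw [hmemB]; omega
  -- construct π₁ : move x to just before y
  have hinj1 : Function.Injective
      (fun a => if a = x then 2 * π.idxOf y else 2 * π.idxOf a + 1) := by
    intro a b h
    simp only at h
    by_cases ha : a = x <;> by_cases hb : b = x
    · rw [ha, hb]
    · rw [if_pos ha, if_neg hb] at h; omega
    · rw [if_neg ha, if_pos hb] at h; omega
    · rw [if_neg ha, if_neg hb] at h
      exact aux_indexOf_inj hπr (by omega)
  obtain ⟨π₁, hπ₁r, hπ₁⟩ := aux_exists_ranking _ hinj1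
  -- construct π₂ : move y to just after x
  have hinj2 : Function.Injective
      (fun a => if a = y then 2 * π.idxOf x + 1 else 2 * π.idxOf a) := by
    intro a b h
    simp only at h
    by_cases ha : a = y <;> by_cases hb : b = y
    · rw [ha, hb]
    · rw [if_pos ha, if_neg hb] at h; omega
    · rw [if_neg ha, if_pos hb] at h; omega
    · rw [if_neg ha, if_neg hb] at h
      exact aux_indexOf_inj hπr (by omega)
  obtain ⟨π₂, hπ₂r, hπ₂⟩ := aux_exists_ranking _ hinj2
  -- first application : l = π₁, l' = π, w = x, W = insert y B
  have flip1 : (d2V π V : ℤ) - (d2V π₁ V : ℤ) = ∑ z ∈ insert y B, del V x z := by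
    apply aux_d2V_flip V π₁ π (insert y B) x
    · simp only [Finset.mem_insert]
      rintro (h | h)
      · exact hxy h
      · exact hxB h
    · intro a b h1 h2
      rw [hπ₁ a b]
      simp only [Finset.mem_insert, not_or] at h1 h2
      by_cases ha : a = x <;> by_cases hb : b = x
      · rw [if_pos ha, if_pos hb, ha, hb]
        omega
      all_goals first
      | (rw [if_pos ha, if_neg hb]
         rcases h1 with h1 | h1
         · exact absurd ha h1
         · obtain ⟨hby, hbB⟩ := h1
           rw [hmemB] at hbB
           have e1 : π.idxOf b ≠ π.idxOf y := hne_idx b y hby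
           have e2 : π.idxOf b ≠ π.idxOf x := hne_idx b x hb
           subst ha
           omega)
      | (rw [if_neg ha, if_pos hb]
         rcases h2 with h2 | h2
         · exact absurd hb h2
         · obtain ⟨hay, haB⟩ := h2
           rw [hmemB] at haB
           have e1 : π.idxOf a ≠ π.idxOf y := hne_idx a y hay
           have e2 : π.idxOf a ≠ π.idxOf x := hne_idx a x ha
           subst hb
           omega)
      | (rw [if_neg ha, if_neg hb]; omega)
    · intro z hz
      rcases Finset.mem_insert.1 hz with rfl | hzB
      · constructor
        · rw [hπ₁ x z, if_pos rfl, if_neg (Ne.symm hxy)]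
          omega
        · exact hyx
      · rw [hmemB] at hzB
        have hzx : z ≠ x := fun h => by rw [h] at hzB; omega
        constructor
        · rw [hπ₁ x z, if_pos rfl, if_neg hzx]
          omega
        · exact hzB.2
  -- second application : l = π, l' = π₂, w = y, W = insert x B
  have flip2 : (d2V π₂ V : ℤ) - (d2V π V : ℤ) = ∑ z ∈ insert x B, del V y z := by
    apply aux_d2V_flip V π π₂ (insert x B) y
    · simp only [Finset.mem_insert]
      rintro (h | h)
      · exact hxy h.symm
      · exact hyB h
    · intro a b h1 h2
      rw [hπ₂ a b]
      simp only [Finset.mem_insert, not_or] at h1 h2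
      by_cases ha : a = y <;> by_cases hb : b = y
      · rw [if_pos ha, if_pos hb, ha, hb]
        omega
      all_goals first
      | (rw [if_pos ha, if_neg hb]
         rcases h1 with h1 | h1
         · exact absurd ha h1
         · obtain ⟨hbx, hbB⟩ := h1
           rw [hmemB] at hbB
           have e1 : π.idxOf b ≠ π.idxOf y := hne_idx b y hb
           have e2 : π.idxOf b ≠ π.idxOf x := hne_idx b x hbx
           subst ha
           omega)
      | (rw [if_neg ha, if_pos hb]
         rcases h2 with h2 | h2
         · exact absurd hb h2
         · obtain ⟨hax, haB⟩ := h2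
           rw [hmemB] at haB
           have e1 : π.idxOf a ≠ π.idxOf y := hne_idx a y ha
           have e2 : π.idxOf a ≠ π.idxOf x := hne_idx a x hax
           subst hb
           omega)
      | (rw [if_neg ha, if_neg hb]; omega)
    · intro z hz
      rcases Finset.mem_insert.1 hz with rfl | hzB
      · refine ⟨hyx, ?_⟩
        rw [hπ₂ z y, if_pos rfl, if_neg hxy]
        omega
      · rw [hmemB] at hzB
        have hzy : z ≠ y := fun h => by rw [h] at hzB; omega
        refine ⟨hzB.1, ?_⟩
        rw [hπ₂ z y, if_pos rfl, if_neg hzy]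
        omega
  -- median inequalities
  have med1 : (d2V π V : ℤ) ≤ (d2V π₁ V : ℤ) := by exact_mod_cast hπ.2 π₁ hπ₁r
  have med2 : (d2V π V : ℤ) ≤ (d2V π₂ V : ℤ) := by exact_mod_cast hπ.2 π₂ hπ₂r
  have s1 : del V x y + ∑ z ∈ B, del V x z ≤ 0 := by
    rw [← Finset.sum_insert hyB]
    rw [← flip1]
    omega
  have s2 : 0 ≤ del V y x + ∑ z ∈ B, del V y z := by
    rw [← Finset.sum_insert hxB, ← flip2]
    omega
  have hdel_anti : ∀ u w : α, del V u w = - del V w u := by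
    intro u w; unfold del; ring
  have key1 : del V x y ≤ ∑ z ∈ B, del V z x := by
    have : ∑ z ∈ B, del V x z = - ∑ z ∈ B, del V z x := by
      rw [← Finset.sum_neg_distrib]
      exact Finset.sum_congr rfl (fun z _ => hdel_anti x z)
    linarith [s1, this.symm.le, this.le]
  have key2 : del V x y ≤ ∑ z ∈ B, del V y z := by
    have := hdel_anti y x
    linarith [s2]
  have key3 : 2 * del V x y ≤ ∑ z ∈ B, (del V y z + del V z x) := by
    rw [Finset.sum_add_distrib]
    linarith
  have key4 : ∑ z ∈ B, (del V y z + del V z x)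
      ≤ ∑ z ∈ B, max 0 (del V y z + del V z x) :=
    Finset.sum_le_sum (fun z _ => le_max_right _ _)
  have hBZ : B ⊆ (Finset.univ : Finset α) \
      ((Finset.univ.filter fun w => (w, y) ∈ U) ∪
        (Finset.univ.filter fun w => (x, w) ∈ U) ∪ {x, y}) := by
    intro z hz
    rw [hmemB] at hz
    simp only [Finset.mem_sdiff, Finset.mem_univ, true_and, Finset.mem_union,
      Finset.mem_filter, Finset.mem_insert, Finset.mem_singleton, not_or]
    refine ⟨⟨?_, ?_⟩, ?_, ?_⟩
    · intro hzU
      have h' : List.idxOf z π < List.idxOf y π := (hU (z, y) hzU).2 π hπ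
      omega
    · intro hzU
      have h' : List.idxOf x π < List.idxOf z π := (hU (x, z) hzU).2 π hπ
      omega
    · rintro rfl; omega
    · rintro rfl; omega
  have key5 : ∑ z ∈ B, max 0 (del V y z + del V z x)
      ≤ ∑ z ∈ (Finset.univ : Finset α) \
        ((Finset.univ.filter fun w => (w, y) ∈ U) ∪
          (Finset.univ.filter fun w => (x, w) ∈ U) ∪ {x, y}),
        max 0 (del V y z + del V z x) :=
    Finset.sum_le_sum_of_subset_of_nonneg hBZ (fun z _ _ => le_max_left _ _)
  linarith
end
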